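/- arXiv:1802.06316 — 3 statements merged into one kernel-verified Lean document; each statement's English description precedes it below -/
import Mathlib

section
/- Let n ≥ 2, let w₂,…,w_n ≥ 2 be integers, and let I = (x₁x₂^{w₂}, x₁x₃^{w₃}, …, x₁x_n^{w_n}) in S = k[x₁,…,x_n]. Then pd(I) = n − 2. -/
open MvPolynomial

namespace Stmt9Aux
open Matrix

def Kb : ℕ → ℕ → Type
  | 0, _ => Empty
  | _+1, 0 => Empty
  | r+1, 1 => Kb r 1 ⊕ Unit
  | r+1, (i+2) => Kb r (i+2) ⊕ Kb r (i+1)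

instance instFintypeKb : (r i : ℕ) → Fintype (Kb r i)
  | 0, _ => inferInstanceAs (Fintype Empty)
  | _+1, 0 => inferInstanceAs (Fintype Empty)
  | r+1, 1 => letI := instFintypeKb r 1; inferInstanceAs (Fintype (Kb r 1 ⊕ Unit))
  | r+1, (i+2) =>
    letI := instFintypeKb r (i+2); letI := instFintypeKb r (i+1)
    inferInstanceAs (Fintype (Kb r (i+2) ⊕ Kb r (i+1)))

instance instDecEqKb : (r i : ℕ) → DecidableEq (Kb r i)
  | 0, _ => inferInstanceAs (DecidableEq Empty)
  | _+1, 0 => inferInstanceAs (DecidableEq Empty)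
  | r+1, 1 => letI := instDecEqKb r 1; inferInstanceAs (DecidableEq (Kb r 1 ⊕ Unit))
  | r+1, (i+2) =>
    letI := instDecEqKb r (i+2); letI := instDecEqKb r (i+1)
    inferInstanceAs (DecidableEq (Kb r (i+2) ⊕ Kb r (i+1)))

theorem kb_isEmpty : (r i : ℕ) → (h : r < i) → IsEmpty (Kb r i)
  | 0, 0, h => absurd h (by omega)
  | 0, _+1, _ => inferInstanceAs (IsEmpty Empty)
  | _+1, 0, h => absurd h (by omega)
  | r+1, 1, h => absurd h (by omega)
  | r+1, (i+2), h =>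
    letI := kb_isEmpty r (i+2) (by omega); letI := kb_isEmpty r (i+1) (by omega)
    inferInstanceAs (IsEmpty (Kb r (i+2) ⊕ Kb r (i+1)))

theorem kb_nonempty : (r : ℕ) → Nonempty (Kb (r+1) (r+1))
  | 0 => ⟨Sum.inr ()⟩
  | r+1 => ⟨Sum.inr (kb_nonempty r).some⟩

variable {A : Type} [CommRing A]

lemma smul_one_mul' {m n : Type} [Fintype m] [DecidableEq m] (c : A) (M : Matrix m n A) :
    (c • (1 : Matrix m m A)) * M = c • M := by
  rw [Matrix.smul_mul, Matrix.one_mul]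

lemma mul_smul_one' {m n : Type} [Fintype n] [DecidableEq n] (c : A) (M : Matrix m n A) :
    M * (c • (1 : Matrix n n A)) = c • M := by
  rw [Matrix.mul_smul, Matrix.mul_one]

def krow (y : ℕ → A) : (r : ℕ) → Matrix Unit (Kb r 1) A
  | 0 => 0
  | r+1 => Matrix.fromCols (krow y r) (Matrix.of fun _ _ => y r)

def khi (y : ℕ → A) : (r i : ℕ) → Matrix (Kb r (i+1)) (Kb r (i+2)) A
  | 0, _ => 0
  | r+1, 0 => Matrix.fromBlocks (khi y r 0)
      (((-1 : A) ^ 1 * y r) • (1 : Matrix (Kb r 1) (Kb r 1) A)) 0 (krow y r)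
  | r+1, i+1 => Matrix.fromBlocks (khi y r (i+1))
      (((-1 : A) ^ (i+2) * y r) • (1 : Matrix (Kb r (i+2)) (Kb r (i+2)) A)) 0 (khi y r i)

theorem krow_mul_khi (y : ℕ → A) : ∀ r, krow y r * khi y r 0 = 0
  | 0 => by
    haveI := kb_isEmpty 0 2 (by omega)
    ext i j; exact isEmptyElim j
  | r+1 => by
    show Matrix.fromCols (krow y r) (Matrix.of fun _ _ => y r) *
      Matrix.fromBlocks (khi y r 0)
        (((-1 : A) ^ 1 * y r) • (1 : Matrix (Kb r 1) (Kb r 1) A)) 0 (krow y r) = 0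
    erw [Matrix.fromCols_mul_fromBlocks]
    have h2 : (Matrix.of fun (_ : Unit) (_ : Unit) => y r) * krow y r = y r • krow y r := by
      ext i j
      simp [Matrix.mul_apply, Matrix.smul_apply, smul_eq_mul]
    simp only [krow_mul_khi y r, h2, mul_smul_one', Matrix.mul_zero, add_zero, zero_add]
    rw [← add_smul]
    have hs : (-1 : A) ^ 1 * y r + y r = 0 := by ring
    rw [hs, zero_smul]
    exact Matrix.fromCols_zero

theorem khi_mul_khi (y : ℕ → A) : ∀ r i, khi y r i * khi y r (i+1) = 0
  | 0, i => by
    haveI := kb_isEmpty 0 (i+1) (by omega)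
    ext a b; exact isEmptyElim a
  | r+1, 0 => by
    show Matrix.fromBlocks (khi y r 0)
        (((-1 : A) ^ 1 * y r) • (1 : Matrix (Kb r 1) (Kb r 1) A)) 0 (krow y r) *
      Matrix.fromBlocks (khi y r 1)
        (((-1 : A) ^ 2 * y r) • (1 : Matrix (Kb r 2) (Kb r 2) A)) 0 (khi y r 0) = 0
    rw [Matrix.fromBlocks_multiply]
    simp only [khi_mul_khi y r 0, krow_mul_khi y r, mul_smul_one', smul_one_mul',
      Matrix.zero_mul, Matrix.mul_zero, smul_zero, add_zero, zero_add]
    rw [← add_smul]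
    have hs : (-1 : A) ^ 2 * y r + (-1 : A) ^ 1 * y r = 0 := by ring
    rw [hs, zero_smul]
    exact Matrix.fromBlocks_zero
  | r+1, i+1 => by
    show Matrix.fromBlocks (khi y r (i+1))
        (((-1 : A) ^ (i+2) * y r) • (1 : Matrix (Kb r (i+2)) (Kb r (i+2)) A)) 0 (khi y r i) *
      Matrix.fromBlocks (khi y r (i+2))
        (((-1 : A) ^ (i+3) * y r) • (1 : Matrix (Kb r (i+3)) (Kb r (i+3)) A)) 0 (khi y r (i+1)) = 0
    rw [Matrix.fromBlocks_multiply]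
    simp only [khi_mul_khi y r (i+1), khi_mul_khi y r i, mul_smul_one', smul_one_mul',
      Matrix.zero_mul, Matrix.mul_zero, smul_zero, add_zero, zero_add]
    rw [← add_smul]
    have hs : (-1 : A) ^ (i + 3) * y r + (-1:A)^(i+2) * y r = 0 := by ring
    rw [hs, zero_smul]
    exact Matrix.fromBlocks_zero


theorem krow_entry (y : ℕ → A) : ∀ r (a : Kb r 1), ∃ j, j < r ∧ krow y r () a = y j
  | 0, a => (kb_isEmpty 0 1 (by omega)).elim a
  | r+1, Sum.inl b => by
    obtain ⟨j, hj, he⟩ := krow_entry y r b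
    refine ⟨j, by omega, ?_⟩
    show Matrix.fromCols (krow y r) (Matrix.of fun _ _ => y r) () (Sum.inl b) = y j
    rw [Matrix.fromCols_apply_inl]; exact he
  | r+1, Sum.inr _ => by
    refine ⟨r, by omega, ?_⟩
    show Matrix.fromCols (krow y r) (Matrix.of fun _ _ => y r) () (Sum.inr ()) = y r
    rw [Matrix.fromCols_apply_inr]; rfl

theorem krow_entry_surj (y : ℕ → A) : ∀ r j, j < r → ∃ a : Kb r 1, krow y r () a = y j
  | 0, j, hj => absurd hj (by omega)
  | r+1, j, hj => by
    rcases Nat.lt_succ_iff_lt_or_eq.mp hj with h | h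
    · obtain ⟨a, ha⟩ := krow_entry_surj y r j h
      refine ⟨Sum.inl a, ?_⟩
      show Matrix.fromCols (krow y r) (Matrix.of fun _ _ => y r) () (Sum.inl a) = y j
      rw [Matrix.fromCols_apply_inl]; exact ha
    · refine ⟨Sum.inr (), ?_⟩
      show Matrix.fromCols (krow y r) (Matrix.of fun _ _ => y r) () (Sum.inr ()) = y j
      rw [Matrix.fromCols_apply_inr]; subst h; rfl

theorem krow_range (y : ℕ → A) :
    ∀ r (g : A), (∃ u, krow y r *ᵥ u = fun _ => g) ↔ g ∈ Ideal.span (y '' Set.Iio r)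
  | 0, g => by
    haveI := kb_isEmpty 0 1 (by omega)
    constructor
    · rintro ⟨u, hu⟩
      have h0 : (0 : Matrix Unit (Kb 0 1) A) *ᵥ u = fun _ => g := hu
      have hg0 : g = 0 := by
        have h := congrFun h0 ()
        simp [Matrix.zero_mulVec] at h
        exact h.symm
      rw [hg0]
      exact Submodule.zero_mem _
    · intro hg
      have hIio : Set.Iio (0:ℕ) = ∅ := by ext j; simp
      rw [hIio, Set.image_empty, Ideal.span_empty, Ideal.mem_bot] at hg
      refine ⟨fun a => isEmptyElim a, ?_⟩
      funext u
      simp [Matrix.mulVec, dotProduct, hg]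
  | r+1, g => by
    have hIio : Set.Iio (r+1) = insert r (Set.Iio r) := by
      ext j
      simp only [Set.mem_Iio, Set.mem_insert_iff]
      omega
    rw [hIio, Set.image_insert_eq]
    constructor
    · rintro ⟨u, hu⟩
      have hu' : Matrix.fromCols (krow y r) (Matrix.of fun _ _ => y r) *ᵥ
          Sum.elim (u ∘ Sum.inl) (u ∘ Sum.inr) = fun _ => g := by
        erw [Sum.elim_comp_inl_inr]; exact hu
      rw [Matrix.fromCols_mulVec_sumElim] at hu'
      have := congrFun hu' ()
      have hy : ((Matrix.of fun (_ : Unit) (_ : Unit) => y r) *ᵥ (u ∘ Sum.inr)) ()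
          = u (Sum.inr ()) * y r := by
        simp [Matrix.mulVec, dotProduct, mul_comm]; rfl
      rw [Ideal.mem_span_insert]
      refine ⟨u (Sum.inr ()), (krow y r *ᵥ (u ∘ Sum.inl)) (), ?_, ?_⟩
      · exact ((krow_range y r _).mp ⟨u ∘ Sum.inl, rfl⟩)
      · rw [← this, Pi.add_apply, hy]; ring
    · intro hg
      rw [Ideal.mem_span_insert] at hg
      obtain ⟨a, z, hz, rfl⟩ := hg
      obtain ⟨u₁, hu₁⟩ := (krow_range y r z).mpr hz
      refine ⟨Sum.elim u₁ (fun _ => a), ?_⟩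
      show Matrix.fromCols (krow y r) (Matrix.of fun _ _ => y r) *ᵥ
        Sum.elim u₁ (fun _ => a) = fun _ => a * y r + z
      erw [Matrix.fromCols_mulVec_sumElim]
      funext x
      have hy : ((Matrix.of fun (_ : Unit) (_ : Unit) => y r) *ᵥ (fun _ => a)) ()
          = a * y r := by
        simp [Matrix.mulVec, dotProduct, mul_comm]
      cases x
      rw [Pi.add_apply, hy, congrFun hu₁ ()]
      ring


theorem koszul_exact (y : ℕ → A) : ∀ r,
    (∀ j, j < r → ∀ f : A, y j * f ∈ Ideal.span (y '' Set.Iio j) →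
      f ∈ Ideal.span (y '' Set.Iio j)) →
    (∀ v : Kb r 1 → A, krow y r *ᵥ v = 0 → ∃ u, khi y r 0 *ᵥ u = v) ∧
    (∀ i (v : Kb r (i+2) → A), khi y r i *ᵥ v = 0 → ∃ u, khi y r (i+1) *ᵥ u = v) := by
  intro r
  induction r with
  | zero =>
    intro _
    constructor
    · intro v _
      haveI := kb_isEmpty 0 1 (by omega)
      exact ⟨fun _ => 0, by funext a; exact isEmptyElim a⟩
    · intro i v _
      haveI := kb_isEmpty 0 (i+2) (by omega)
      exact ⟨fun _ => 0, by funext a; exact isEmptyElim a⟩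
  | succ r IH =>
    intro hreg
    obtain ⟨IH0, IH1⟩ := IH (fun j hj => hreg j (by omega))
    have hregr := hreg r (by omega)
    constructor
    · -- exactness at level 1
      intro v hv
      set a := v ∘ Sum.inl with ha
      set b := v ∘ Sum.inr with hb
      have hv' : krow y r *ᵥ a + (Matrix.of fun (_:Unit) (_:Unit) => y r) *ᵥ b = 0 := by
        rw [← Matrix.fromCols_mulVec_sumElim]
        erw [ha, hb, Sum.elim_comp_inl_inr]
        exact hv
      have h2 : ((Matrix.of fun (_:Unit) (_:Unit) => y r) *ᵥ b) () = y r * b () := by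
        simp [Matrix.mulVec, dotProduct]
      have hsum : (krow y r *ᵥ a) () + y r * b () = 0 := by
        have := congrFun hv' ()
        simp only [Pi.add_apply, Pi.zero_apply] at this
        rw [h2] at this
        exact this
      have hmem : y r * b () ∈ Ideal.span (y '' Set.Iio r) := by
        have hex : ∃ u, krow y r *ᵥ u = fun _ => y r * b () := by
          refine ⟨-a, ?_⟩
          funext x
          cases x
          rw [Matrix.mulVec_neg]
          simp only [Pi.neg_apply]
          linear_combination -hsum
        exact (krow_range y r _).mp hex
      have hbmem : b () ∈ Ideal.span (y '' Set.Iio r) := hregr _ hmem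
      obtain ⟨e, he⟩ := (krow_range y r _).mpr hbmem
      have hae : krow y r *ᵥ (a + y r • e) = 0 := by
        rw [Matrix.mulVec_add, Matrix.mulVec_smul, he]
        funext x
        cases x
        simp only [Pi.add_apply, Pi.smul_apply, Pi.zero_apply, smul_eq_mul]
        linear_combination hsum
      obtain ⟨c, hc⟩ := IH0 (a + y r • e) hae
      refine ⟨Sum.elim c e, ?_⟩
      show Matrix.fromBlocks (khi y r 0)
          (((-1 : A) ^ 1 * y r) • (1 : Matrix (Kb r 1) (Kb r 1) A)) 0 (krow y r) *ᵥ
        Sum.elim c e = v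
      rw [Matrix.fromBlocks_mulVec, Sum.elim_comp_inl, Sum.elim_comp_inr, hc, he,
        Matrix.smul_mulVec, Matrix.one_mulVec, Matrix.zero_mulVec]
      funext x
      cases x with
      | inl x1 =>
        simp only [Sum.elim_inl, Pi.add_apply, Pi.smul_apply, smul_eq_mul]
        have hax : v (Sum.inl x1) = a x1 := rfl
        rw [hax]
        ring
      | inr x2 =>
        simp only [Sum.elim_inr, Pi.add_apply, Pi.zero_apply, zero_add]
        cases x2
        rfl
    · -- exactness at higher levels
      intro i
      match i with
      | 0 =>
        intro v hv
        set a := v ∘ Sum.inl with ha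
        set b := v ∘ Sum.inr with hb
        have hv0 : Matrix.fromBlocks (khi y r 0)
            (((-1 : A) ^ 1 * y r) • (1 : Matrix (Kb r 1) (Kb r 1) A)) 0 (krow y r) *ᵥ
            Sum.elim a b = 0 := by
          erw [ha, hb, Sum.elim_comp_inl_inr]
          exact hv
        rw [Matrix.fromBlocks_mulVec, Sum.elim_comp_inl, Sum.elim_comp_inr,
          Matrix.smul_mulVec, Matrix.one_mulVec, Matrix.zero_mulVec] at hv0
        have h1 : khi y r 0 *ᵥ a + ((-1 : A) ^ 1 * y r) • b = 0 := by
          funext t; exact congrFun hv0 (Sum.inl t)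
        have h2 : krow y r *ᵥ b = 0 := by
          funext t
          have h := congrFun hv0 (Sum.inr t)
          simpa using h
        obtain ⟨e, he⟩ := IH0 b h2
        have hae : khi y r 0 *ᵥ (a + ((-1 : A) ^ 1 * y r) • e) = 0 := by
          rw [Matrix.mulVec_add, Matrix.mulVec_smul, he]
          exact h1
        obtain ⟨c, hc⟩ := IH1 0 _ hae
        refine ⟨Sum.elim c e, ?_⟩
        show Matrix.fromBlocks (khi y r 1)
            (((-1 : A) ^ 2 * y r) • (1 : Matrix (Kb r 2) (Kb r 2) A)) 0
            (khi y r 0) *ᵥ Sum.elim c e = v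
        rw [Matrix.fromBlocks_mulVec, Sum.elim_comp_inl, Sum.elim_comp_inr, hc, he,
          Matrix.smul_mulVec, Matrix.one_mulVec, Matrix.zero_mulVec]
        funext x
        cases x with
        | inl x1 =>
          simp only [Sum.elim_inl, Pi.add_apply, Pi.smul_apply, smul_eq_mul]
          have hax : v (Sum.inl x1) = a x1 := rfl
          rw [hax]
          ring
        | inr x2 =>
          simp only [Sum.elim_inr, Pi.add_apply, Pi.zero_apply, zero_add]
          rfl
      | (i' + 1) =>
        intro v hv
        set a := v ∘ Sum.inl with ha
        set b := v ∘ Sum.inr with hb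
        have hv0 : Matrix.fromBlocks (khi y r (i'+1))
            (((-1 : A) ^ (i'+2) * y r) • (1 : Matrix (Kb r (i'+2)) (Kb r (i'+2)) A)) 0
            (khi y r i') *ᵥ Sum.elim a b = 0 := by
          erw [ha, hb, Sum.elim_comp_inl_inr]
          exact hv
        rw [Matrix.fromBlocks_mulVec, Sum.elim_comp_inl, Sum.elim_comp_inr,
          Matrix.smul_mulVec, Matrix.one_mulVec, Matrix.zero_mulVec] at hv0
        have h1 : khi y r (i'+1) *ᵥ a + ((-1 : A) ^ (i'+2) * y r) • b = 0 := by
          funext t; exact congrFun hv0 (Sum.inl t)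
        have h2 : khi y r i' *ᵥ b = 0 := by
          funext t
          have h := congrFun hv0 (Sum.inr t)
          simpa using h
        obtain ⟨e, he⟩ := IH1 i' b h2
        have hae : khi y r (i'+1) *ᵥ (a + ((-1 : A) ^ (i'+2) * y r) • e) = 0 := by
          rw [Matrix.mulVec_add, Matrix.mulVec_smul, he]
          exact h1
        obtain ⟨c, hc⟩ := IH1 (i'+1) _ hae
        refine ⟨Sum.elim c e, ?_⟩
        show Matrix.fromBlocks (khi y r (i'+2))
            (((-1 : A) ^ (i'+3) * y r) • (1 : Matrix (Kb r (i'+3)) (Kb r (i'+3)) A)) 0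
            (khi y r (i'+1)) *ᵥ Sum.elim c e = v
        rw [Matrix.fromBlocks_mulVec, Sum.elim_comp_inl, Sum.elim_comp_inr, hc, he,
          Matrix.smul_mulVec, Matrix.one_mulVec, Matrix.zero_mulVec]
        funext x
        cases x with
        | inl x1 =>
          simp only [Sum.elim_inl, Pi.add_apply, Pi.smul_apply, smul_eq_mul]
          have hax : v (Sum.inl x1) = a x1 := rfl
          rw [hax]
          ring
        | inr x2 =>
          simp only [Sum.elim_inr, Pi.add_apply, Pi.zero_apply, zero_add]
          rfl

theorem krow_map_zero {B : Type} [CommRing B] (φ : A →+* B) (y : ℕ → A) :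
    ∀ r, (∀ j, j < r → φ (y j) = 0) → (krow y r).map φ = 0
  | 0, _ => by
    haveI := kb_isEmpty 0 1 (by omega)
    ext u x; exact isEmptyElim x
  | r+1, h => by
    have IH := krow_map_zero φ y r (fun j hj => h j (by omega))
    ext u x
    cases x with
    | inl x1 =>
      show φ (Matrix.fromCols (krow y r) (Matrix.of fun _ _ => y r) u (Sum.inl x1)) = 0
      rw [Matrix.fromCols_apply_inl]
      have := congrFun (congrFun IH u) x1
      simpa [Matrix.map_apply] using this
    | inr x2 =>
      show φ (Matrix.fromCols (krow y r) (Matrix.of fun _ _ => y r) u (Sum.inr x2)) = 0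
      rw [Matrix.fromCols_apply_inr]
      exact h r (by omega)

theorem khi_map_zero {B : Type} [CommRing B] (φ : A →+* B) (y : ℕ → A) :
    ∀ r i, (∀ j, j < r → φ (y j) = 0) → (khi y r i).map φ = 0
  | 0, i, _ => by
    haveI := kb_isEmpty 0 (i+1) (by omega)
    ext a x; exact isEmptyElim a
  | r+1, 0, h => by
    have IH0 := khi_map_zero φ y r 0 (fun j hj => h j (by omega))
    have IHrow := krow_map_zero φ y r (fun j hj => h j (by omega))
    ext a x
    show φ ((Matrix.fromBlocks (khi y r 0)
      (((-1 : A) ^ 1 * y r) • (1 : Matrix (Kb r 1) (Kb r 1) A)) 0 (krow y r)) a x) = 0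
    cases a with
    | inl a1 =>
      cases x with
      | inl x1 =>
        rw [Matrix.fromBlocks_apply₁₁]
        have := congrFun (congrFun IH0 a1) x1
        simpa [Matrix.map_apply] using this
      | inr x2 =>
        rw [Matrix.fromBlocks_apply₁₂]
        rw [Matrix.smul_apply, smul_eq_mul, _root_.map_mul, _root_.map_mul]
        simp [h r (by omega)]
    | inr a2 =>
      cases x with
      | inl x1 =>
        rw [Matrix.fromBlocks_apply₂₁]
        simp
      | inr x2 =>
        rw [Matrix.fromBlocks_apply₂₂]
        have := congrFun (congrFun IHrow a2) x2
        simpa [Matrix.map_apply] using this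
  | r+1, i+1, h => by
    have IH1 := khi_map_zero φ y r (i+1) (fun j hj => h j (by omega))
    have IH0 := khi_map_zero φ y r i (fun j hj => h j (by omega))
    ext a x
    show φ ((Matrix.fromBlocks (khi y r (i+1))
      (((-1 : A) ^ (i+2) * y r) • (1 : Matrix (Kb r (i+2)) (Kb r (i+2)) A)) 0
      (khi y r i)) a x) = 0
    cases a with
    | inl a1 =>
      cases x with
      | inl x1 =>
        rw [Matrix.fromBlocks_apply₁₁]
        have := congrFun (congrFun IH1 a1) x1
        simpa [Matrix.map_apply] using this
      | inr x2 =>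
        rw [Matrix.fromBlocks_apply₁₂]
        rw [Matrix.smul_apply, smul_eq_mul, _root_.map_mul, _root_.map_mul]
        simp [h r (by omega)]
    | inr a2 =>
      cases x with
      | inl x1 =>
        rw [Matrix.fromBlocks_apply₂₁]
        simp
      | inr x2 =>
        rw [Matrix.fromBlocks_apply₂₂]
        have := congrFun (congrFun IH0 a2) x2
        simpa [Matrix.map_apply] using this

section Helpers

variable {a b c d : Type}

lemma col_mul_eq [Fintype b] (M : Matrix a b A) (N : Matrix b c A) (j : c) :
    M *ᵥ (fun s => N s j) = fun i => (M * N) i j := by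
  funext i
  simp [Matrix.mul_apply, Matrix.mulVec, dotProduct]

lemma exists_right_factor [Fintype b] {M : Matrix a b A} {N : Matrix a c A}
    (h : ∀ j, ∃ u, M *ᵥ u = fun i => N i j) : ∃ C : Matrix b c A, M * C = N := by
  choose u hu using h
  refine ⟨Matrix.of fun s j => u j s, ?_⟩
  ext i j
  have := congrFun (hu j) i
  simpa [Matrix.mul_apply, Matrix.mulVec, dotProduct] using this

lemma lift_of_exact [Fintype b] [Fintype c] {M : Matrix a b A} {M' : Matrix b c A}
    {N : Matrix b d A} (hex : ∀ v, M *ᵥ v = 0 → ∃ u, M' *ᵥ u = v) (hz : M * N = 0) :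
    ∃ C : Matrix c d A, M' * C = N := by
  refine exists_right_factor (fun j => hex (fun s => N s j) ?_)
  rw [col_mul_eq, hz]
  funext i
  simp

lemma exact_pt [Fintype b] [Fintype c] {M : Matrix a b A} {M' : Matrix b c A}
    (h : LinearMap.range M'.mulVecLin = LinearMap.ker M.mulVecLin) :
    ∀ v, M *ᵥ v = 0 → ∃ u, M' *ᵥ u = v := by
  intro v hv
  have hmem : v ∈ LinearMap.ker M.mulVecLin := by
    rw [LinearMap.mem_ker, Matrix.mulVecLin_apply]
    exact hv
  rw [← h] at hmem
  obtain ⟨u, hu⟩ := hmem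
  exact ⟨u, by rw [← Matrix.mulVecLin_apply]; exact hu⟩

lemma mul_eq_zero_of_exact [Fintype b] [Fintype c] [DecidableEq c] {M : Matrix a b A}
    {M' : Matrix b c A}
    (h : LinearMap.range M'.mulVecLin = LinearMap.ker M.mulVecLin) : M * M' = 0 := by
  ext i j
  have hcol : (fun s => M' s j) ∈ LinearMap.range M'.mulVecLin := by
    refine ⟨Pi.single j 1, ?_⟩
    rw [Matrix.mulVecLin_apply, Matrix.mulVec_single]
    funext s
    simp
  rw [h, LinearMap.mem_ker, Matrix.mulVecLin_apply] at hcol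
  have := congrFun hcol i
  rw [col_mul_eq] at this
  simpa using this

end Helpers

section Inst

variable {k : Type} [Field k] {n : ℕ}

/-- enumeration of the non-center vertices -/
def fi (n : ℕ) (x₁ : Fin n) (j : ℕ) : Fin n :=
  if h : j + 1 < n then ⟨j+1, h⟩ else x₁

/-- the pure powers `x_i^{w_i}` -/
noncomputable def yy (k : Type) [Field k] (n : ℕ) (w : Fin n → ℕ) (x₁ : Fin n) :
    ℕ → MvPolynomial (Fin n) k :=
  fun j => X (fi n x₁ j) ^ w (fi n x₁ j)

variable {w : Fin n → ℕ} {x₁ : Fin n}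

lemma fi_lt (hj : j + 1 < n) : fi n x₁ j = ⟨j+1, hj⟩ := dif_pos hj

lemma fi_ne (hx₁ : (x₁ : ℕ) = 0) (hj : j < n - 1) : fi n x₁ j ≠ x₁ := by
  have h : j + 1 < n := by omega
  rw [fi_lt h]
  intro hc
  have := congrArg (Fin.val) hc
  simp [hx₁] at this

lemma fi_inj (hj : j < n - 1) (hj' : j' < n - 1) (h : fi n x₁ j = fi n x₁ j') : j = j' := by
  have h1 : j + 1 < n := by omega
  have h2 : j' + 1 < n := by omega
  rw [fi_lt h1, fi_lt h2] at h
  have := congrArg (Fin.val) h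
  simpa using this

lemma fi_surj (hx₁ : (x₁ : ℕ) = 0) (i : Fin n) (hi : i ≠ x₁) :
    ∃ j, j < n - 1 ∧ fi n x₁ j = i := by
  have hival : (i : ℕ) ≠ 0 := by
    intro hc
    exact hi (Fin.ext (by rw [hc, hx₁]))
  refine ⟨(i : ℕ) - 1, by omega, ?_⟩
  have h : (i : ℕ) - 1 + 1 < n := by omega
  rw [fi_lt h]
  apply Fin.ext
  simp
  omega

lemma yy_reg (hx₁ : (x₁ : ℕ) = 0) :
    ∀ j, j < n - 1 → ∀ f : MvPolynomial (Fin n) k,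
      yy k n w x₁ j * f ∈ Ideal.span (yy k n w x₁ '' Set.Iio j) →
      f ∈ Ideal.span (yy k n w x₁ '' Set.Iio j) := by
  intro j hj f hf
  have himg : yy k n w x₁ '' Set.Iio j =
      (fun s => monomial s (1:k)) ''
        ((fun j' => Finsupp.single (fi n x₁ j') (w (fi n x₁ j'))) '' Set.Iio j) := by
    rw [Set.image_image]
    apply Set.image_congr
    intro j' _
    exact X_pow_eq_monomial
  rw [himg] at hf ⊢
  rw [mem_ideal_span_monomial_image] at hf ⊢
  intro m hm
  set d := Finsupp.single (fi n x₁ j) (w (fi n x₁ j)) with hd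
  have hdm : d + m ∈ (yy k n w x₁ j * f).support := by
    rw [mem_support_iff]
    have : yy k n w x₁ j * f = monomial d 1 * f := by rw [yy, X_pow_eq_monomial]
    rw [this, coeff_monomial_mul, one_mul]
    exact mem_support_iff.mp hm
  obtain ⟨s, hs, hle⟩ := hf _ hdm
  refine ⟨s, hs, ?_⟩
  obtain ⟨j', hj', rfl⟩ := hs
  have hne : fi n x₁ j' ≠ fi n x₁ j := by
    intro hc
    have := fi_inj (by simp at hj'; omega) hj hc
    simp at hj'
    omega
  rw [Finsupp.single_le_iff] at hle ⊢
  rw [Finsupp.add_apply] at hle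
  rw [hd, Finsupp.single_apply] at hle
  simpa [if_neg hne.symm] using hle

lemma yy_cc (hx₁ : (x₁ : ℕ) = 0) (hw : ∀ i : Fin n, i ≠ x₁ → 2 ≤ w i) :
    ∀ j, j < n - 1 → constantCoeff (yy k n w x₁ j) = 0 := by
  intro j hj
  rw [yy, map_pow, constantCoeff_X]
  have := hw _ (fi_ne hx₁ hj)
  exact zero_pow (by omega)

end Inst

end Stmt9Aux

/-- A finite minimal graded free resolution of an ideal `I` in a polynomial ring
`k[x_i : i ∈ σ]`, recorded via the ranks of the free modules, the degrees of the
(degree-shifted) basis elements, the matrices of the differentials and the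
augmentation map onto `I`.  Exactness is expressed via `Matrix.mulVecLin`, and
minimality via the vanishing of the constant coefficients of all matrix entries. -/
structure MinFreeRes (σ k : Type) [Field k] (I : Ideal (MvPolynomial σ k)) where
  rank : ℕ → ℕ
  deg : (i : ℕ) → Fin (rank i) → ℕ
  aug : Fin (rank 0) → MvPolynomial σ k
  mat : (i : ℕ) → Matrix (Fin (rank i)) (Fin (rank (i + 1))) (MvPolynomial σ k)
  finite : ∃ N, ∀ i, N ≤ i → rank i = 0
  aug_homog : ∀ s, (aug s).IsHomogeneous (deg 0 s)
  span_aug : Ideal.span (Set.range aug) = I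
  mat_homog : ∀ i s t, ∃ d, ((mat i) s t).IsHomogeneous d ∧ deg (i + 1) t = deg i s + d
  minimal : ∀ i s t, constantCoeff ((mat i) s t) = 0
  exact_succ : ∀ i,
    LinearMap.range (Matrix.mulVecLin (mat (i + 1))) = LinearMap.ker (Matrix.mulVecLin (mat i))
  exact_zero :
    LinearMap.range (Matrix.mulVecLin (mat 0)) =
      LinearMap.ker (Matrix.mulVecLin (Matrix.of fun (_ : Unit) s => aug s))

variable {σ k : Type} [Field k] {I : Ideal (MvPolynomial σ k)}

/-- The graded Betti number `β_{i,j}(I)`: the number of basis elements of the `i`-th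
free module in the minimal free resolution sitting in degree `j`. -/
def MinFreeRes.betti (R : MinFreeRes σ k I) (i j : ℕ) : ℕ :=
  (Finset.univ.filter fun t => R.deg i t = j).card

/-- The projective dimension `pd(I) = max{i : β_{i,j}(I) ≠ 0 for some j}`. -/
noncomputable def MinFreeRes.pd (R : MinFreeRes σ k I) : ℕ :=
  sSup {i | R.rank i ≠ 0}

/-- The Castelnuovo–Mumford regularity `reg(I) = max{j - i : β_{i,j}(I) ≠ 0}`. -/
noncomputable def MinFreeRes.reg (R : MinFreeRes σ k I) : ℕ :=
  sSup {d | ∃ i t, R.deg i t = i + d}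

/-- The depth of a module `M` over the polynomial ring: the maximal length of a
regular sequence on `M` consisting of elements of the maximal graded ideal
`(x_i : i ∈ σ)` (i.e. with vanishing constant coefficient). -/
noncomputable def mdepth (σ k : Type) [Field k] (M : Type) [AddCommGroup M]
    [Module (MvPolynomial σ k) M] : ℕ :=
  sSup {r | ∃ rs : List (MvPolynomial σ k), rs.length = r ∧
    (∀ x ∈ rs, constantCoeff x = 0) ∧ RingTheory.Sequence.IsRegular M rs}

open Stmt9Aux Matrix in
/-- Theorem 3.1, case (1): the edge ideal
`I = (x₁x₂^{w₂}, …, x₁x_n^{w_n})` of a weighted oriented star with all edges directed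
away from the center `x₁` and weights `w_i ≥ 2` has projective dimension `n - 2`.
(Vertices `x₁, …, x_n` are indexed by `0, …, n-1 : Fin n`, the center being `0`.) -/
theorem stmt9 (k : Type) [Field k] (n : ℕ) (hn : 2 ≤ n) (w : Fin n → ℕ)
    (x₁ : Fin n) (hx₁ : (x₁ : ℕ) = 0)
    (hw : ∀ i : Fin n, i ≠ x₁ → 2 ≤ w i)
    (I : Ideal (MvPolynomial (Fin n) k))
    (hI : I = Ideal.span {f | ∃ i : Fin n, i ≠ x₁ ∧ f = X x₁ * X i ^ w i})
    (R : MinFreeRes (Fin n) k I) :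
    R.pd = n - 2 := by
  classical
  have hreg := Stmt9Aux.yy_reg (k := k) (n := n) (w := w) (x₁ := x₁) hx₁
  have hKex := Stmt9Aux.koszul_exact (yy k n w x₁) (n-1) hreg
  have hccy : ∀ j, j < n-1 → constantCoeff (yy k n w x₁ j) = 0 := Stmt9Aux.yy_cc hx₁ hw
  have hDD : ∀ i, khi (yy k n w x₁) (n-1) i * khi (yy k n w x₁) (n-1) (i+1) = 0 :=
    khi_mul_khi (yy k n w x₁) (n-1)
  have hrowD : krow (yy k n w x₁) (n-1) * khi (yy k n w x₁) (n-1) 0 = 0 :=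
    krow_mul_khi (yy k n w x₁) (n-1)
  have hepsD : ((X x₁ : MvPolynomial (Fin n) k) • krow (yy k n w x₁) (n-1)) *
      khi (yy k n w x₁) (n-1) 0 = 0 := by
    rw [Matrix.smul_mul, hrowD, smul_zero]
  have hXne : (X x₁ : MvPolynomial (Fin n) k) ≠ 0 := X_ne_zero _
  have hexK0 : ∀ v, ((X x₁ : MvPolynomial (Fin n) k) • krow (yy k n w x₁) (n-1)) *ᵥ v = 0 →
      ∃ u, khi (yy k n w x₁) (n-1) 0 *ᵥ u = v := by
    intro v hv
    apply hKex.1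
    have h1 : (X x₁ : MvPolynomial (Fin n) k) • (krow (yy k n w x₁) (n-1) *ᵥ v) = 0 := by
      rw [← Matrix.smul_mulVec]; exact hv
    funext u
    have h2 := congrFun h1 u
    simp only [Pi.smul_apply, smul_eq_mul, Pi.zero_apply] at h2
    rcases mul_eq_zero.mp h2 with h | h
    · exact absurd h hXne
    · exact h
  have hexK : ∀ i v, khi (yy k n w x₁) (n-1) i *ᵥ v = 0 →
      ∃ u, khi (yy k n w x₁) (n-1) (i+1) *ᵥ u = v := hKex.2
  have hexR : ∀ i (v : Fin (R.rank (i+1)) → MvPolynomial (Fin n) k),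
      R.mat i *ᵥ v = 0 → ∃ u, R.mat (i+1) *ᵥ u = v :=
    fun i => exact_pt (R.exact_succ i)
  have hexR0 : ∀ v, (Matrix.of fun (_ : Unit) s => R.aug s) *ᵥ v = 0 →
      ∃ u, R.mat 0 *ᵥ u = v := exact_pt R.exact_zero
  have hmm : ∀ i, R.mat i * R.mat (i+1) = 0 := fun i => mul_eq_zero_of_exact (R.exact_succ i)
  have haug0 : (Matrix.of fun (_ : Unit) s => R.aug s) * R.mat 0 = 0 :=
    mul_eq_zero_of_exact R.exact_zero
  have haugI : ∀ s, R.aug s ∈ I := by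
    intro s
    have h : R.aug s ∈ Ideal.span (Set.range R.aug) :=
      Ideal.subset_span (Set.mem_range_self s)
    rwa [R.span_aug] at h
  have hcolI : ∀ a : Kb (n-1) 1,
      ((X x₁ : MvPolynomial (Fin n) k) • krow (yy k n w x₁) (n-1)) () a ∈ I := by
    intro a
    obtain ⟨j, hj, hja⟩ := krow_entry (yy k n w x₁) (n-1) a
    have he : ((X x₁ : MvPolynomial (Fin n) k) • krow (yy k n w x₁) (n-1)) () a =
        X x₁ * X (fi n x₁ j) ^ w (fi n x₁ j) := by
      rw [Matrix.smul_apply, hja, smul_eq_mul]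
      rfl
    rw [hI, he]
    exact Ideal.subset_span ⟨fi n x₁ j, fi_ne hx₁ hj, rfl⟩
  have hIsurjR : ∀ g ∈ I, ∃ v, (Matrix.of fun (_ : Unit) s => R.aug s) *ᵥ v = fun _ => g := by
    intro g hg
    rw [← R.span_aug] at hg
    obtain ⟨c, hc⟩ := (Submodule.mem_span_range_iff_exists_fun _).mp hg
    refine ⟨c, ?_⟩
    funext u
    cases u
    show ∑ s, (Matrix.of fun (_ : Unit) s => R.aug s) () s * c s = g
    rw [← hc]
    apply Finset.sum_congr rfl
    intro s _
    rw [smul_eq_mul, mul_comm]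
    rfl
  have hIsurjK : ∀ g ∈ I, ∃ v,
      ((X x₁ : MvPolynomial (Fin n) k) • krow (yy k n w x₁) (n-1)) *ᵥ v = fun _ => g := by
    have hsub : I ≤ Ideal.span (Set.range
        (fun a => ((X x₁ : MvPolynomial (Fin n) k) • krow (yy k n w x₁) (n-1)) () a)) := by
      rw [hI]
      apply Ideal.span_le.mpr
      rintro f ⟨i, hi, rfl⟩
      obtain ⟨j, hj, hfij⟩ := fi_surj hx₁ i hi
      obtain ⟨a, ha⟩ := krow_entry_surj (yy k n w x₁) (n-1) j hj
      apply Ideal.subset_span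
      refine ⟨a, ?_⟩
      show ((X x₁ : MvPolynomial (Fin n) k) • krow (yy k n w x₁) (n-1)) () a =
        X x₁ * X i ^ w i
      rw [Matrix.smul_apply, ha, smul_eq_mul]
      show X x₁ * (X (fi n x₁ j) ^ w (fi n x₁ j)) = X x₁ * X i ^ w i
      rw [hfij]
    intro g hg
    obtain ⟨c, hc⟩ := (Submodule.mem_span_range_iff_exists_fun _).mp (hsub hg)
    refine ⟨c, ?_⟩
    funext u
    cases u
    show ∑ a, ((X x₁ : MvPolynomial (Fin n) k) • krow (yy k n w x₁) (n-1)) () a * c a = g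
    rw [← hc]
    apply Finset.sum_congr rfl
    intro a _
    rw [smul_eq_mul, mul_comm]
  -- the comparison chain map from the Koszul resolution to R
  have stepA : ∀ (i : ℕ) (M : Matrix (Fin (R.rank i)) (Kb (n-1) (i+1)) (MvPolynomial (Fin n) k))
      (M' : Matrix (Fin (R.rank (i+1))) (Kb (n-1) (i+2)) (MvPolynomial (Fin n) k)),
      R.mat i * M' = M * khi (yy k n w x₁) (n-1) i →
      ∃ C : Matrix (Fin (R.rank (i+2))) (Kb (n-1) (i+3)) (MvPolynomial (Fin n) k),
        R.mat (i+1) * C = M' * khi (yy k n w x₁) (n-1) (i+1) := by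
    intro i M M' h
    apply lift_of_exact (hexR i)
    rw [← Matrix.mul_assoc, h, Matrix.mul_assoc, hDD i, Matrix.mul_zero]
  obtain ⟨a0, ha0⟩ : ∃ M, (Matrix.of fun (_ : Unit) s => R.aug s) * M =
      (X x₁ : MvPolynomial (Fin n) k) • krow (yy k n w x₁) (n-1) :=
    exists_right_factor (fun j => hIsurjR _ (hcolI j))
  obtain ⟨a1, ha1⟩ : ∃ C : Matrix (Fin (R.rank 1)) (Kb (n-1) 2) (MvPolynomial (Fin n) k),
      R.mat 0 * C = a0 * khi (yy k n w x₁) (n-1) 0 := by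
    apply lift_of_exact hexR0
    rw [← Matrix.mul_assoc, ha0, hepsD]
  obtain ⟨α, hα0, hαc⟩ : ∃ α : ∀ i,
      Matrix (Fin (R.rank i)) (Kb (n-1) (i+1)) (MvPolynomial (Fin n) k),
      ((Matrix.of fun (_ : Unit) s => R.aug s) * α 0 =
        (X x₁ : MvPolynomial (Fin n) k) • krow (yy k n w x₁) (n-1)) ∧
      ∀ i, R.mat i * α (i+1) = α i * khi (yy k n w x₁) (n-1) i := by
    let F : ∀ i, Σ' (M : Matrix (Fin (R.rank i)) (Kb (n-1) (i+1)) (MvPolynomial (Fin n) k))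
        (M' : Matrix (Fin (R.rank (i+1))) (Kb (n-1) (i+2)) (MvPolynomial (Fin n) k)),
        R.mat i * M' = M * khi (yy k n w x₁) (n-1) i :=
      fun i => Nat.rec ⟨a0, a1, ha1⟩
        (fun i prev => ⟨prev.2.1, Classical.choose (stepA i prev.1 prev.2.1 prev.2.2),
          Classical.choose_spec (stepA i prev.1 prev.2.1 prev.2.2)⟩) i
    exact ⟨fun i => (F i).1, ha0, fun i => (F i).2.2⟩
  -- the comparison chain map from R to the Koszul resolution
  have stepB : ∀ (i : ℕ) (M : Matrix (Kb (n-1) (i+1)) (Fin (R.rank i)) (MvPolynomial (Fin n) k))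
      (M' : Matrix (Kb (n-1) (i+2)) (Fin (R.rank (i+1))) (MvPolynomial (Fin n) k)),
      khi (yy k n w x₁) (n-1) i * M' = M * R.mat i →
      ∃ C : Matrix (Kb (n-1) (i+3)) (Fin (R.rank (i+2))) (MvPolynomial (Fin n) k),
        khi (yy k n w x₁) (n-1) (i+1) * C = M' * R.mat (i+1) := by
    intro i M M' h
    apply lift_of_exact (hexK i)
    rw [← Matrix.mul_assoc, h, Matrix.mul_assoc, hmm i, Matrix.mul_zero]
  obtain ⟨b0, hb0⟩ : ∃ M, ((X x₁ : MvPolynomial (Fin n) k) • krow (yy k n w x₁) (n-1)) * M =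
      (Matrix.of fun (_ : Unit) s => R.aug s) :=
    exists_right_factor (fun s => hIsurjK _ (haugI s))
  obtain ⟨b1, hb1⟩ : ∃ C : Matrix (Kb (n-1) 2) (Fin (R.rank 1)) (MvPolynomial (Fin n) k),
      khi (yy k n w x₁) (n-1) 0 * C = b0 * R.mat 0 := by
    apply lift_of_exact hexK0
    rw [← Matrix.mul_assoc, hb0, haug0]
  obtain ⟨β, hβ0, hβc⟩ : ∃ β : ∀ i,
      Matrix (Kb (n-1) (i+1)) (Fin (R.rank i)) (MvPolynomial (Fin n) k),
      (((X x₁ : MvPolynomial (Fin n) k) • krow (yy k n w x₁) (n-1)) * β 0 =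
        (Matrix.of fun (_ : Unit) s => R.aug s)) ∧
      ∀ i, khi (yy k n w x₁) (n-1) i * β (i+1) = β i * R.mat i := by
    let F : ∀ i, Σ' (M : Matrix (Kb (n-1) (i+1)) (Fin (R.rank i)) (MvPolynomial (Fin n) k))
        (M' : Matrix (Kb (n-1) (i+2)) (Fin (R.rank (i+1))) (MvPolynomial (Fin n) k)),
        khi (yy k n w x₁) (n-1) i * M' = M * R.mat i :=
      fun i => Nat.rec ⟨b0, b1, hb1⟩
        (fun i prev => ⟨prev.2.1, Classical.choose (stepB i prev.1 prev.2.1 prev.2.2),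
          Classical.choose_spec (stepB i prev.1 prev.2.1 prev.2.2)⟩) i
    exact ⟨fun i => (F i).1, hb0, fun i => (F i).2.2⟩
  -- homotopy on the R side
  obtain ⟨h0, hh0⟩ : ∃ H0 : Matrix (Fin (R.rank 1)) (Fin (R.rank 0)) (MvPolynomial (Fin n) k),
      R.mat 0 * H0 = α 0 * β 0 - 1 := by
    apply lift_of_exact hexR0
    rw [Matrix.mul_sub, Matrix.mul_one, ← Matrix.mul_assoc, hα0, hβ0, sub_self]
  have hab0 : α 0 * β 0 = 1 + R.mat 0 * h0 := by rw [hh0]; abel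
  obtain ⟨h1, hh1⟩ : ∃ H1 : Matrix (Fin (R.rank 2)) (Fin (R.rank 1)) (MvPolynomial (Fin n) k),
      R.mat 1 * H1 = α 1 * β 1 - 1 - h0 * R.mat 0 := by
    apply lift_of_exact (hexR 0)
    rw [Matrix.mul_sub, Matrix.mul_sub, Matrix.mul_one]
    rw [← Matrix.mul_assoc (R.mat 0) (α 1) (β 1), hαc 0, Matrix.mul_assoc, hβc 0,
      ← Matrix.mul_assoc, hab0]
    rw [Matrix.add_mul, Matrix.one_mul, ← Matrix.mul_assoc]
    abel
  have hab1 : α 1 * β 1 = 1 + R.mat 1 * h1 + h0 * R.mat 0 := by rw [hh1]; abel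
  have stepHF : ∀ (i : ℕ)
      (H : Matrix (Fin (R.rank (i+1))) (Fin (R.rank i)) (MvPolynomial (Fin n) k))
      (H' : Matrix (Fin (R.rank (i+2))) (Fin (R.rank (i+1))) (MvPolynomial (Fin n) k)),
      α (i+1) * β (i+1) = 1 + R.mat (i+1) * H' + H * R.mat i →
      ∃ H'' : Matrix (Fin (R.rank (i+3))) (Fin (R.rank (i+2))) (MvPolynomial (Fin n) k),
        α (i+2) * β (i+2) = 1 + R.mat (i+2) * H'' + H' * R.mat (i+1) := by
    intro i H H' hspec
    obtain ⟨H'', h''⟩ : ∃ H'' : Matrix (Fin (R.rank (i+3))) (Fin (R.rank (i+2)))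
        (MvPolynomial (Fin n) k),
        R.mat (i+2) * H'' = α (i+2) * β (i+2) - 1 - H' * R.mat (i+1) := by
      apply lift_of_exact (hexR (i+1))
      rw [Matrix.mul_sub, Matrix.mul_sub, Matrix.mul_one]
      rw [← Matrix.mul_assoc (R.mat (i+1)) (α (i+2)) (β (i+2)), hαc (i+1), Matrix.mul_assoc,
        hβc (i+1), ← Matrix.mul_assoc, hspec]
      rw [Matrix.add_mul, Matrix.add_mul, Matrix.one_mul]
      rw [Matrix.mul_assoc H (R.mat i) (R.mat (i+1)), hmm i, Matrix.mul_zero]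
      rw [← Matrix.mul_assoc (R.mat (i+1)) H' (R.mat (i+1))]
      abel
    exact ⟨H'', by rw [h'']; abel⟩
  obtain ⟨hF, hhF0, hhFs⟩ : ∃ hF : ∀ i,
      Matrix (Fin (R.rank (i+1))) (Fin (R.rank i)) (MvPolynomial (Fin n) k),
      (α 0 * β 0 = 1 + R.mat 0 * hF 0) ∧
      ∀ i, α (i+1) * β (i+1) = 1 + R.mat (i+1) * hF (i+1) + hF i * R.mat i := by
    let F : ∀ i, Σ' (H : Matrix (Fin (R.rank (i+1))) (Fin (R.rank i)) (MvPolynomial (Fin n) k))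
        (H' : Matrix (Fin (R.rank (i+2))) (Fin (R.rank (i+1))) (MvPolynomial (Fin n) k)),
        α (i+1) * β (i+1) = 1 + R.mat (i+1) * H' + H * R.mat i :=
      fun i => Nat.rec ⟨h0, h1, hab1⟩
        (fun i prev => ⟨prev.2.1, Classical.choose (stepHF i prev.1 prev.2.1 prev.2.2),
          Classical.choose_spec (stepHF i prev.1 prev.2.1 prev.2.2)⟩) i
    exact ⟨fun i => (F i).1, hab0, fun i => (F i).2.2⟩
  -- homotopy on the Koszul side
  obtain ⟨g0, hg0⟩ : ∃ G0 : Matrix (Kb (n-1) 2) (Kb (n-1) 1) (MvPolynomial (Fin n) k),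
      khi (yy k n w x₁) (n-1) 0 * G0 = β 0 * α 0 - 1 := by
    apply lift_of_exact hexK0
    rw [Matrix.mul_sub, Matrix.mul_one, ← Matrix.mul_assoc, hβ0, hα0, sub_self]
  have hba0 : β 0 * α 0 = 1 + khi (yy k n w x₁) (n-1) 0 * g0 := by rw [hg0]; abel
  obtain ⟨g1, hg1⟩ : ∃ G1 : Matrix (Kb (n-1) 3) (Kb (n-1) 2) (MvPolynomial (Fin n) k),
      khi (yy k n w x₁) (n-1) 1 * G1 =
        β 1 * α 1 - 1 - g0 * khi (yy k n w x₁) (n-1) 0 := by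
    apply lift_of_exact (hexK 0)
    rw [Matrix.mul_sub, Matrix.mul_sub, Matrix.mul_one]
    rw [← Matrix.mul_assoc (khi (yy k n w x₁) (n-1) 0) (β 1) (α 1), hβc 0, Matrix.mul_assoc,
      hαc 0, ← Matrix.mul_assoc, hba0]
    rw [Matrix.add_mul, Matrix.one_mul, ← Matrix.mul_assoc]
    abel
  have hba1 : β 1 * α 1 = 1 + khi (yy k n w x₁) (n-1) 1 * g1 +
      g0 * khi (yy k n w x₁) (n-1) 0 := by rw [hg1]; abel
  have stepHK : ∀ (i : ℕ)
      (G : Matrix (Kb (n-1) (i+2)) (Kb (n-1) (i+1)) (MvPolynomial (Fin n) k))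
      (G' : Matrix (Kb (n-1) (i+3)) (Kb (n-1) (i+2)) (MvPolynomial (Fin n) k)),
      β (i+1) * α (i+1) = 1 + khi (yy k n w x₁) (n-1) (i+1) * G' +
        G * khi (yy k n w x₁) (n-1) i →
      ∃ G'' : Matrix (Kb (n-1) (i+4)) (Kb (n-1) (i+3)) (MvPolynomial (Fin n) k),
        β (i+2) * α (i+2) = 1 + khi (yy k n w x₁) (n-1) (i+2) * G'' +
          G' * khi (yy k n w x₁) (n-1) (i+1) := by
    intro i G G' hspec
    obtain ⟨G'', h''⟩ : ∃ G'' : Matrix (Kb (n-1) (i+4)) (Kb (n-1) (i+3))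
        (MvPolynomial (Fin n) k),
        khi (yy k n w x₁) (n-1) (i+2) * G'' =
          β (i+2) * α (i+2) - 1 - G' * khi (yy k n w x₁) (n-1) (i+1) := by
      apply lift_of_exact (hexK (i+1))
      rw [Matrix.mul_sub, Matrix.mul_sub, Matrix.mul_one]
      rw [← Matrix.mul_assoc (khi (yy k n w x₁) (n-1) (i+1)) (β (i+2)) (α (i+2)),
        hβc (i+1), Matrix.mul_assoc, hαc (i+1), ← Matrix.mul_assoc, hspec]
      rw [Matrix.add_mul, Matrix.add_mul, Matrix.one_mul]
      rw [Matrix.mul_assoc G (khi (yy k n w x₁) (n-1) i) (khi (yy k n w x₁) (n-1) (i+1)),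
        hDD i, Matrix.mul_zero]
      rw [← Matrix.mul_assoc (khi (yy k n w x₁) (n-1) (i+1)) G'
        (khi (yy k n w x₁) (n-1) (i+1))]
      abel
    exact ⟨G'', by rw [h'']; abel⟩
  obtain ⟨hK, hhK0, hhKs⟩ : ∃ hK : ∀ i,
      Matrix (Kb (n-1) (i+2)) (Kb (n-1) (i+1)) (MvPolynomial (Fin n) k),
      (β 0 * α 0 = 1 + khi (yy k n w x₁) (n-1) 0 * hK 0) ∧
      ∀ i, β (i+1) * α (i+1) = 1 + khi (yy k n w x₁) (n-1) (i+1) * hK (i+1) +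
        hK i * khi (yy k n w x₁) (n-1) i := by
    let F : ∀ i, Σ' (G : Matrix (Kb (n-1) (i+2)) (Kb (n-1) (i+1)) (MvPolynomial (Fin n) k))
        (G' : Matrix (Kb (n-1) (i+3)) (Kb (n-1) (i+2)) (MvPolynomial (Fin n) k)),
        β (i+1) * α (i+1) = 1 + khi (yy k n w x₁) (n-1) (i+1) * G' +
          G * khi (yy k n w x₁) (n-1) i :=
      fun i => Nat.rec ⟨g0, g1, hba1⟩
        (fun i prev => ⟨prev.2.1, Classical.choose (stepHK i prev.1 prev.2.1 prev.2.2),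
          Classical.choose_spec (stepHK i prev.1 prev.2.1 prev.2.2)⟩) i
    exact ⟨fun i => (F i).1, hba0, fun i => (F i).2.2⟩
  -- reduce everything modulo the maximal ideal via constantCoeff
  have mapAdd : ∀ {p q : Type} (M N : Matrix p q (MvPolynomial (Fin n) k)),
      (M + N).map (constantCoeff : MvPolynomial (Fin n) k →+* k) =
        M.map constantCoeff + N.map constantCoeff := by
    intro p q M N
    ext i j
    simp [Matrix.map_apply]
  have hmapR : ∀ i, (R.mat i).map (constantCoeff : MvPolynomial (Fin n) k →+* k) = 0 := by
    intro i
    ext s t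
    simp only [Matrix.map_apply, Matrix.zero_apply]
    exact R.minimal i s t
  have hmapD : ∀ i, (khi (yy k n w x₁) (n-1) i).map
      (constantCoeff : MvPolynomial (Fin n) k →+* k) = 0 :=
    fun i => khi_map_zero constantCoeff (yy k n w x₁) (n-1) i (fun j hj => hccy j hj)
  have hABk : ∀ i, (α i).map (constantCoeff : MvPolynomial (Fin n) k →+* k) *
      (β i).map (constantCoeff : MvPolynomial (Fin n) k →+* k) = 1 := by
    intro i
    cases i with
    | zero =>
      rw [← Matrix.map_mul, hhF0, mapAdd, Matrix.map_mul, hmapR 0, Matrix.zero_mul, add_zero]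
      exact Matrix.map_one _ (map_zero _) (map_one _)
    | succ i =>
      rw [← Matrix.map_mul, hhFs i, mapAdd, mapAdd, Matrix.map_mul, Matrix.map_mul,
        hmapR (i+1), hmapR i, Matrix.zero_mul, Matrix.mul_zero, add_zero, add_zero]
      exact Matrix.map_one _ (map_zero _) (map_one _)
  have hBAk : ∀ i, (β i).map (constantCoeff : MvPolynomial (Fin n) k →+* k) *
      (α i).map (constantCoeff : MvPolynomial (Fin n) k →+* k) = 1 := by
    intro i
    cases i with
    | zero =>
      rw [← Matrix.map_mul, hhK0, mapAdd, Matrix.map_mul, hmapD 0, Matrix.zero_mul, add_zero]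
      exact Matrix.map_one _ (map_zero _) (map_one _)
    | succ i =>
      rw [← Matrix.map_mul, hhKs i, mapAdd, mapAdd, Matrix.map_mul, Matrix.map_mul,
        hmapD (i+1), hmapD i, Matrix.zero_mul, Matrix.mul_zero, add_zero, add_zero]
      exact Matrix.map_one _ (map_zero _) (map_one _)
  -- rank vanishing in high degrees
  have hrankHi : ∀ i, n - 1 ≤ i → R.rank i = 0 := by
    intro i hi
    by_contra h0q
    haveI hempty : IsEmpty (Kb (n-1) (i+1)) := kb_isEmpty (n-1) (i+1) (by omega)
    have hs : 0 < R.rank i := Nat.pos_of_ne_zero h0q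
    have h1 := congrFun (congrFun (hABk i) ⟨0, hs⟩) ⟨0, hs⟩
    rw [Matrix.mul_apply, Finset.univ_eq_empty, Finset.sum_empty] at h1
    rw [Matrix.one_apply_eq] at h1
    exact zero_ne_one h1
  -- nonvanishing at n-2
  have hrankTop : R.rank (n-2) ≠ 0 := by
    intro h0q
    have ha : Nonempty (Kb (n-1) ((n-2)+1)) := by
      have he : (n-2)+1 = n-1 := by omega
      rw [he]
      obtain ⟨r', hr'⟩ : ∃ r', n - 1 = r' + 1 := ⟨n-2, by omega⟩
      rw [hr']
      exact kb_nonempty r'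
    obtain ⟨a⟩ := ha
    haveI : IsEmpty (Fin (R.rank (n-2))) := by rw [h0q]; infer_instance
    have h1 := congrFun (congrFun (hBAk (n-2)) a) a
    rw [Matrix.mul_apply, Finset.univ_eq_empty, Finset.sum_empty] at h1
    rw [Matrix.one_apply_eq] at h1
    exact zero_ne_one h1
  -- conclusion
  show sSup {i | R.rank i ≠ 0} = n - 2
  apply le_antisymm
  · refine csSup_le ⟨n-2, hrankTop⟩ ?_
    intro i hi
    by_contra hgt
    push_neg at hgt
    exact hi (hrankHi i (by omega))
  · exact le_csSup ⟨n-2, fun i hi => by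
      by_contra hgt
      push_neg at hgt
      exact hi (hrankHi i (by omega))⟩ hrankTop
end

section
/- Let D be a weighted rooted forest (a disjoint union of trees each with all edges oriented away from its root) on vertex set {x₁,…,x_n}, with weight function w satisfying w(x) ≥ 2 for every vertex x, and let I(D) = (x_i x_j^{w_j} : x_i→x_j ∈ E(D)) ⊆ S = k[x₁,…,x_n]. Then pd(I(D)) = |E(D)| − 1. -/
open MvPolynomial

variable {σ k : Type} [Field k] {I : Ideal (MvPolynomial σ k)}

namespace Stmt13Aux
noncomputable section
variable {n : ℕ} {k : Type} [Field k]

abbrev ΛT (E : Finset (Fin n)) (c : ℕ) : Type := {A : Finset (Fin n) // A ⊆ E ∧ A.card = c}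
instance (E : Finset (Fin n)) (c : ℕ) : Fintype (ΛT E c) := by unfold ΛT; infer_instance
instance (E : Finset (Fin n)) (c : ℕ) : DecidableEq (ΛT E c) := by unfold ΛT; infer_instance

variable (md : Fin n → (Fin n →₀ ℕ))

def Lm (A : Finset (Fin n)) : Fin n →₀ ℕ := A.sup md
lemma Lm_mono {A B : Finset (Fin n)} (h : A ⊆ B) : Lm md A ≤ Lm md B := Finset.sup_mono h
lemma le_Lm {A : Finset (Fin n)} {e : Fin n} (h : e ∈ A) : md e ≤ Lm md A := Finset.le_sup h
lemma Lm_empty : Lm md (∅ : Finset (Fin n)) = 0 := Finset.sup_empty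
lemma Lm_singleton (e : Fin n) : Lm md {e} = md e := Finset.sup_singleton

def sgn (A : Finset (Fin n)) (e : Fin n) : k := (-1 : k) ^ (A.filter (fun f => f < e)).card

lemma sgn_erase (A : Finset (Fin n)) (e : Fin n) : (sgn (A.erase e) e : k) = sgn A e := by
  unfold sgn
  congr 2
  ext f
  simp only [Finset.mem_filter, Finset.mem_erase]
  exact ⟨fun h => ⟨h.1.2, h.2⟩, fun h => ⟨⟨ne_of_lt h.2, h.1⟩, h.2⟩⟩

lemma sgn_eq_one {A : Finset (Fin n)} {e : Fin n} (h : ∀ f ∈ A, ¬ f < e) : (sgn A e : k) = 1 := by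
  unfold sgn
  rw [Finset.filter_false_of_mem h]
  simp

lemma sgn_insert_of_lt {A : Finset (Fin n)} {e f : Fin n} (hef : e < f) (he : e ∉ A) :
    (sgn (insert e A) f : k) = - sgn A f := by
  unfold sgn
  rw [Finset.filter_insert, if_pos hef, Finset.card_insert_of_notMem (fun hc => he (Finset.mem_of_mem_filter _ hc))]
  rw [pow_succ]
  ring

lemma sgn_insert_of_not_lt {A : Finset (Fin n)} {e f : Fin n} (hef : ¬ e < f) :
    (sgn (insert e A) f : k) = sgn A f := by
  unfold sgn
  rw [Finset.filter_insert, if_neg hef]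

lemma sgn_cancel {A : Finset (Fin n)} {e f : Fin n} (hef : e ≠ f) (he : e ∉ A) (hf : f ∉ A) :
    (sgn A e : k) * sgn (insert e A) f + sgn A f * sgn (insert f A) e = 0 := by
  rcases lt_or_gt_of_ne hef with h | h
  · rw [sgn_insert_of_lt h he, sgn_insert_of_not_lt (asymm h)]
    ring
  · rw [sgn_insert_of_lt h hf, sgn_insert_of_not_lt (asymm h)]
    ring

/-- Taylor differential, from level `c+1` to level `c` (levels indexed by cardinality). -/
def DT (E : Finset (Fin n)) (c : ℕ) : Matrix (ΛT E c) (ΛT E (c + 1)) (MvPolynomial (Fin n) k) :=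
  fun A B => ∑ e ∈ B.1, if A.1 = B.1.erase e then
      monomial (Lm md B.1 - Lm md A.1) (sgn A.1 e) else 0

lemma DT_apply_erase {E : Finset (Fin n)} {c : ℕ} (A : ΛT E c) (B : ΛT E (c + 1)) {e : Fin n}
    (he : e ∈ B.1) (h : A.1 = B.1.erase e) :
    (DT md E c A B : MvPolynomial (Fin n) k) = monomial (Lm md B.1 - Lm md A.1) (sgn A.1 e) := by
  unfold DT
  rw [Finset.sum_eq_single_of_mem e he, if_pos h]
  intro e' he' hne
  rw [if_neg]
  intro hc
  exact hne ((Finset.erase_inj B.1 he').mp (hc.symm.trans h))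

lemma DT_apply_of_not_subset {E : Finset (Fin n)} {c : ℕ} (A : ΛT E c) (B : ΛT E (c + 1))
    (h : ¬ A.1 ⊆ B.1) : (DT md E c A B : MvPolynomial (Fin n) k) = 0 := by
  unfold DT
  apply Finset.sum_eq_zero
  intro e _
  rw [if_neg]
  intro hc
  exact h (hc ▸ Finset.erase_subset e B.1)

lemma subset_succ_struct {E : Finset (Fin n)} {c : ℕ} (A : ΛT E c) (B : ΛT E (c + 1))
    (h : A.1 ⊆ B.1) : ∃ e ∈ B.1, e ∉ A.1 ∧ A.1 = B.1.erase e ∧ B.1 = insert e A.1 := by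
  have hcard : (B.1 \ A.1).card = 1 := by
    rw [Finset.card_sdiff_of_subset h, A.2.2, B.2.2, Nat.add_sub_cancel_left]
  obtain ⟨e, he⟩ := Finset.card_eq_one.mp hcard
  have heB : e ∈ B.1 := (Finset.mem_sdiff.mp (he ▸ Finset.mem_singleton_self e)).1
  have heA : e ∉ A.1 := (Finset.mem_sdiff.mp (he ▸ Finset.mem_singleton_self e)).2
  have hAB : A.1 = B.1.erase e := by
    apply Finset.eq_of_subset_of_card_le
    · intro x hx
      exact Finset.mem_erase.mpr ⟨fun hc => heA (hc ▸ hx), h hx⟩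
    · rw [Finset.card_erase_of_mem heB, B.2.2, A.2.2]
      omega
  exact ⟨e, heB, heA, hAB, by rw [hAB, Finset.insert_erase heB]⟩

lemma DT_ne_zero_subset {E : Finset (Fin n)} {c : ℕ} {A : ΛT E c} {B : ΛT E (c + 1)}
    (h : (DT md E c A B : MvPolynomial (Fin n) k) ≠ 0) : A.1 ⊆ B.1 := by
  by_contra hc
  exact h (DT_apply_of_not_subset md A B hc)

lemma sum_eq_add' {α M : Type} [Fintype α] [AddCommMonoid M] [DecidableEq α] (f : α → M) (a b : α)
    (hab : a ≠ b) (h : ∀ c, c ≠ a → c ≠ b → f c = 0) : ∑ c, f c = f a + f b := by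
  rw [show (Finset.univ : Finset α) = insert a (insert b (Finset.univ \ {a, b})) from ?_]
  · rw [Finset.sum_insert, Finset.sum_insert, Finset.sum_eq_zero, add_zero]
    · intro x hx
      simp only [Finset.mem_sdiff, Finset.mem_insert, Finset.mem_singleton] at hx
      exact h x (fun hc => hx.2 (Or.inl hc)) (fun hc => hx.2 (Or.inr hc))
    · simp
    · simp [hab]
  · ext x
    by_cases hxa : x = a <;> by_cases hxb : x = b <;> simp [hxa, hxb]

lemma DT_mul_DT (E : Finset (Fin n)) (c : ℕ) :
    (DT (k := k) md E c) * (DT (k := k) md E (c + 1)) = 0 := by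
  funext A C
  show (∑ B : ΛT E (c+1), DT md E c A B * DT md E (c+1) B C) = 0
  by_cases hsub : A.1 ⊆ C.1
  case neg =>
    apply Finset.sum_eq_zero
    intro B _
    rcases eq_or_ne (DT md E c A B : MvPolynomial (Fin n) k) 0 with h | h
    · rw [h, zero_mul]
    rcases eq_or_ne (DT md E (c+1) B C : MvPolynomial (Fin n) k) 0 with h2 | h2
    · rw [h2, mul_zero]
    exact absurd ((DT_ne_zero_subset md h).trans (DT_ne_zero_subset md h2)) hsub
  case pos =>
    have hcard : (C.1 \ A.1).card = 2 := by
      rw [Finset.card_sdiff_of_subset hsub, A.2.2, C.2.2]; omega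
    obtain ⟨e, f, hef, hCA⟩ := Finset.card_eq_two.mp hcard
    have heC : e ∈ C.1 := (Finset.mem_sdiff.mp (hCA ▸ (by simp : e ∈ ({e, f} : Finset (Fin n))))).1
    have heA : e ∉ A.1 := (Finset.mem_sdiff.mp (hCA ▸ (by simp : e ∈ ({e, f} : Finset (Fin n))))).2
    have hfC : f ∈ C.1 := (Finset.mem_sdiff.mp (hCA ▸ (by simp : f ∈ ({e, f} : Finset (Fin n))))).1
    have hfA : f ∉ A.1 := (Finset.mem_sdiff.mp (hCA ▸ (by simp : f ∈ ({e, f} : Finset (Fin n))))).2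
    have hBe : insert e A.1 ⊆ E ∧ (insert e A.1).card = c + 1 :=
      ⟨Finset.insert_subset (C.2.1 heC) A.2.1, by rw [Finset.card_insert_of_notMem heA, A.2.2]⟩
    have hBf : insert f A.1 ⊆ E ∧ (insert f A.1).card = c + 1 :=
      ⟨Finset.insert_subset (C.2.1 hfC) A.2.1, by rw [Finset.card_insert_of_notMem hfA, A.2.2]⟩
    set B1 : ΛT E (c+1) := ⟨insert e A.1, hBe⟩
    set B2 : ΛT E (c+1) := ⟨insert f A.1, hBf⟩
    have hB12 : B1 ≠ B2 := by
      intro hc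
      have h1 : e ∈ insert e A.1 := Finset.mem_insert_self e A.1
      have h2 : e ∈ insert f A.1 := by
        have heq : insert e A.1 = insert f A.1 := congrArg (fun B : ΛT E (c+1) => B.1) hc
        exact heq ▸ h1
      rcases Finset.mem_insert.mp h2 with h | h
      exacts [hef h, heA h]
    rw [sum_eq_add' _ B1 B2 hB12]
    · -- compute the two products
      have hCeq : C.1 = A.1 ∪ {e, f} := by
        rw [← hCA, Finset.union_sdiff_of_subset hsub]
      have hCe : B1.1 = C.1.erase f := by
        show insert e A.1 = C.1.erase f
        ext x
        simp only [Finset.mem_insert, Finset.mem_erase, hCeq, Finset.mem_union, Finset.mem_insert,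
          Finset.mem_singleton]
        constructor
        · rintro (rfl | hx)
          · exact ⟨hef, Or.inr (Or.inl rfl)⟩
          · exact ⟨fun hc => hfA (hc ▸ hx), Or.inl hx⟩
        · rintro ⟨hxf, (hx | rfl | rfl)⟩
          exacts [Or.inr hx, Or.inl rfl, absurd rfl hxf]
      have hCf : B2.1 = C.1.erase e := by
        show insert f A.1 = C.1.erase e
        ext x
        simp only [Finset.mem_insert, Finset.mem_erase, hCeq, Finset.mem_union, Finset.mem_insert,
          Finset.mem_singleton]
        constructor
        · rintro (rfl | hx)
          · exact ⟨(Ne.symm hef), Or.inr (Or.inr rfl)⟩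
          · exact ⟨fun hc => heA (hc ▸ hx), Or.inl hx⟩
        · rintro ⟨hxe, (hx | rfl | rfl)⟩
          exacts [Or.inr hx, absurd rfl hxe, Or.inl rfl]
      rw [DT_apply_erase md A B1 (by simp [B1]) (by rw [Finset.erase_insert heA] : A.1 = B1.1.erase e),
          DT_apply_erase md B1 C hfC hCe,
          DT_apply_erase md A B2 (by simp [B2]) (by rw [Finset.erase_insert hfA] : A.1 = B2.1.erase f),
          DT_apply_erase md B2 C heC hCf]
      rw [monomial_mul, monomial_mul]
      have h1 : Lm md A.1 ≤ Lm md B1.1 := Lm_mono md (Finset.subset_insert _ _)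
      have h2 : Lm md B1.1 ≤ Lm md C.1 := Lm_mono md (hCe ▸ Finset.erase_subset _ _)
      have h3 : Lm md A.1 ≤ Lm md B2.1 := Lm_mono md (Finset.subset_insert _ _)
      have h4 : Lm md B2.1 ≤ Lm md C.1 := Lm_mono md (hCf ▸ Finset.erase_subset _ _)
      have hexp1 : Lm md B1.1 - Lm md A.1 + (Lm md C.1 - Lm md B1.1) = Lm md C.1 - Lm md A.1 := by
        rw [add_comm, tsub_add_tsub_cancel h2 h1]
      have hexp2 : Lm md B2.1 - Lm md A.1 + (Lm md C.1 - Lm md B2.1) = Lm md C.1 - Lm md A.1 := by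
        rw [add_comm, tsub_add_tsub_cancel h4 h3]
      rw [hexp1, hexp2, ← map_add]
      have hcancel : (sgn A.1 e : k) * sgn B1.1 f + sgn A.1 f * sgn B2.1 e = 0 := by
        show (sgn A.1 e : k) * sgn (insert e A.1) f + sgn A.1 f * sgn (insert f A.1) e = 0
        exact sgn_cancel hef heA hfA
      rw [hcancel, map_zero]
    · -- all other terms vanish
      intro B hB1 hB2
      rcases eq_or_ne (DT md E c A B : MvPolynomial (Fin n) k) 0 with h | h
      · rw [h, zero_mul]
      rcases eq_or_ne (DT md E (c+1) B C : MvPolynomial (Fin n) k) 0 with h2 | h2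
      · rw [h2, mul_zero]
      obtain ⟨x, hxB, hxA, _, hBx⟩ := subset_succ_struct A B (DT_ne_zero_subset md h)
      have hxCA : x ∈ C.1 \ A.1 := Finset.mem_sdiff.mpr ⟨(DT_ne_zero_subset md h2) hxB, hxA⟩
      rw [hCA] at hxCA
      rcases Finset.mem_insert.mp hxCA with rfl | hx
      · exact absurd (Subtype.ext hBx : B = B1) hB1
      · rw [Finset.mem_singleton] at hx
        subst hx
        exact absurd (Subtype.ext hBx : B = B2) hB2


def Ef (E : Finset (Fin n)) (μ : Fin n →₀ ℕ) : Finset (Fin n) :=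
  E.filter (fun e => md e ≤ μ)

lemma mem_Ef {E : Finset (Fin n)} {μ : Fin n →₀ ℕ} {e : Fin n} :
    e ∈ Ef md E μ ↔ e ∈ E ∧ md e ≤ μ := Finset.mem_filter

def sb {E : Finset (Fin n)} {c : ℕ} (A : ΛT E c) (d : Fin n →₀ ℕ) (b : k) :
    ΛT E (c + 1) → MvPolynomial (Fin n) k :=
  if h : (Ef md E (d + Lm md A.1)).Nonempty then
    (if he : (Ef md E (d + Lm md A.1)).min' h ∈ A.1 then 0
     else Pi.single
        (⟨insert ((Ef md E (d + Lm md A.1)).min' h) A.1,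
          ⟨Finset.insert_subset (Finset.mem_filter.mp (Finset.min'_mem _ h)).1 A.2.1,
           by rw [Finset.card_insert_of_notMem he, A.2.2]⟩⟩ : ΛT E (c + 1))
        (monomial (d + Lm md A.1 - Lm md (insert ((Ef md E (d + Lm md A.1)).min' h) A.1)) b))
  else 0

def sT {E : Finset (Fin n)} {c : ℕ} (v : ΛT E c → MvPolynomial (Fin n) k) :
    ΛT E (c + 1) → MvPolynomial (Fin n) k :=
  ∑ A : ΛT E c, ∑ d ∈ (v A).support, sb md A d (coeff d (v A))

lemma sb_zero {E : Finset (Fin n)} {c : ℕ} (A : ΛT E c) (d : Fin n →₀ ℕ) :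
    sb md A d (0 : k) = 0 := by
  unfold sb
  split_ifs with h he
  · rfl
  · rw [map_zero, Pi.single_zero]
  · rfl

lemma sb_add {E : Finset (Fin n)} {c : ℕ} (A : ΛT E c) (d : Fin n →₀ ℕ) (b b' : k) :
    sb md A d (b + b') = sb md A d b + sb md A d b' := by
  unfold sb
  split_ifs with h he
  · rw [add_zero]
  · rw [map_add, Pi.single_add]
  · rw [add_zero]

lemma sum_support_add {M : Type} [AddCommMonoid M] (p q : MvPolynomial (Fin n) k)
    (g : (Fin n →₀ ℕ) → k → M) (hg0 : ∀ d, g d 0 = 0)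
    (hgadd : ∀ d b b', g d (b + b') = g d b + g d b') :
    ∑ d ∈ (p + q).support, g d (coeff d (p + q)) =
      (∑ d ∈ p.support, g d (coeff d p)) + ∑ d ∈ q.support, g d (coeff d q) := by
  have h1 : ∑ d ∈ (p + q).support, g d (coeff d (p + q)) =
      ∑ d ∈ p.support ∪ q.support, g d (coeff d (p + q)) := by
    apply Finset.sum_subset (MvPolynomial.support_add)
    intro x _ hx
    rw [MvPolynomial.notMem_support_iff.mp hx, hg0]
  have h2 : ∑ d ∈ p.support, g d (coeff d p) =
      ∑ d ∈ p.support ∪ q.support, g d (coeff d p) := by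
    apply Finset.sum_subset Finset.subset_union_left
    intro x _ hx
    rw [MvPolynomial.notMem_support_iff.mp hx, hg0]
  have h3 : ∑ d ∈ q.support, g d (coeff d q) =
      ∑ d ∈ q.support ∪ p.support, g d (coeff d q) := by
    apply Finset.sum_subset Finset.subset_union_left
    intro x _ hx
    rw [MvPolynomial.notMem_support_iff.mp hx, hg0]
  rw [h1, h2, h3, Finset.union_comm q.support p.support, ← Finset.sum_add_distrib]
  apply Finset.sum_congr rfl
  intro x _
  rw [MvPolynomial.coeff_add, hgadd]

lemma sT_add {E : Finset (Fin n)} {c : ℕ} (v w : ΛT E c → MvPolynomial (Fin n) k) :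
    sT md (v + w) = sT md v + sT md w := by
  unfold sT
  rw [← Finset.sum_add_distrib]
  apply Finset.sum_congr rfl
  intro A _
  have : (v + w) A = v A + w A := rfl
  rw [this]
  exact sum_support_add (v A) (w A) (fun d b => sb md A d b) (fun d => sb_zero md A d)
    (fun d b b' => sb_add md A d b b')

lemma sT_zero {E : Finset (Fin n)} {c : ℕ} : sT md (0 : ΛT E c → MvPolynomial (Fin n) k) = 0 := by
  unfold sT
  apply Finset.sum_eq_zero
  intro A _
  have : (0 : ΛT E c → MvPolynomial (Fin n) k) A = 0 := rfl
  rw [this]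
  simp

/-- `sT` as an additive monoid hom -/
def sTh (E : Finset (Fin n)) (c : ℕ) :
    (ΛT E c → MvPolynomial (Fin n) k) →+ (ΛT E (c + 1) → MvPolynomial (Fin n) k) :=
  AddMonoidHom.mk' (sT md) (sT_add md)

lemma sT_single {E : Finset (Fin n)} {c : ℕ} (A : ΛT E c) (d : Fin n →₀ ℕ) (b : k) :
    sT md (Pi.single A (monomial d b)) = sb md A d b := by
  unfold sT
  classical
  rw [Finset.sum_eq_single A]
  · rw [Pi.single_eq_same]
    by_cases hb : b = 0
    · subst hb
      rw [sb_zero, MvPolynomial.support_monomial, if_pos rfl, Finset.sum_empty]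
    · rw [MvPolynomial.support_monomial, if_neg hb, Finset.sum_singleton, MvPolynomial.coeff_monomial,
        if_pos rfl]
  · intro A' _ hne
    rw [Pi.single_eq_of_ne hne]
    simp
  · intro h
    exact absurd (Finset.mem_univ A) h


lemma decomp_singles {E : Finset (Fin n)} {c : ℕ} (v : ΛT E c → MvPolynomial (Fin n) k) :
    v = ∑ A : ΛT E c, ∑ d ∈ (v A).support, Pi.single A (monomial d (coeff d (v A))) := by
  funext A'
  rw [Finset.sum_apply]
  rw [Finset.sum_eq_single A']
  · rw [Finset.sum_apply]
    have : ∀ d ∈ (v A').support, (Pi.single A' (monomial d (coeff d (v A'))) : ΛT E c → MvPolynomial (Fin n) k) A' = monomial d (coeff d (v A')) := by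
      intro d _
      rw [Pi.single_eq_same]
    rw [Finset.sum_congr rfl this, support_sum_monomial_coeff]
  · intro A _ hne
    rw [Finset.sum_apply]
    apply Finset.sum_eq_zero
    intro d _
    exact Pi.single_eq_of_ne (Ne.symm hne) _
  · intro h
    exact absurd (Finset.mem_univ A') h

lemma addHom_apply_decomp {E : Finset (Fin n)} {c : ℕ} {β : Type} [AddCommMonoid β]
    (T : (ΛT E c → MvPolynomial (Fin n) k) →+ β) (v : ΛT E c → MvPolynomial (Fin n) k) :
    T v = ∑ A : ΛT E c, ∑ d ∈ (v A).support, T (Pi.single A (monomial d (coeff d (v A)))) := by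
  conv_lhs => rw [decomp_singles v]
  rw [map_sum]
  exact Finset.sum_congr rfl fun A _ => map_sum T _ _

lemma sb_eval_of_mem {E : Finset (Fin n)} {c : ℕ} (A : ΛT E c) (d : Fin n →₀ ℕ) (b : k)
    {μ : Fin n →₀ ℕ} (hμ : d + Lm md A.1 = μ) (hne : (Ef md E μ).Nonempty)
    (hm : (Ef md E μ).min' hne ∈ A.1) : sb md A d b = 0 := by
  subst hμ
  unfold sb
  rw [dif_pos hne, dif_pos hm]

lemma sb_eval_of_not_mem {E : Finset (Fin n)} {c : ℕ} (A : ΛT E c) (d : Fin n →₀ ℕ) (b : k)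
    {μ : Fin n →₀ ℕ} (hμ : d + Lm md A.1 = μ) (hne : (Ef md E μ).Nonempty)
    (hm : (Ef md E μ).min' hne ∉ A.1)
    (h1 : insert ((Ef md E μ).min' hne) A.1 ⊆ E)
    (h2 : (insert ((Ef md E μ).min' hne) A.1).card = c + 1) :
    sb md A d b = Pi.single
      (⟨insert ((Ef md E μ).min' hne) A.1, h1, h2⟩ : ΛT E (c + 1))
      (monomial (μ - Lm md (insert ((Ef md E μ).min' hne) A.1)) b) := by
  subst hμ
  unfold sb
  rw [dif_pos hne, dif_neg hm]

lemma sb_eval_of_not_mem2 {E : Finset (Fin n)} {c : ℕ} (A : ΛT E c) (d : Fin n →₀ ℕ) (b : k)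
    {μ : Fin n →₀ ℕ} (hμ : d + Lm md A.1 = μ) (hne : (Ef md E μ).Nonempty)
    (hm : (Ef md E μ).min' hne ∉ A.1) (Bg : ΛT E (c + 1))
    (hBg : Bg.1 = insert ((Ef md E μ).min' hne) A.1) :
    sb md A d b = Pi.single Bg (monomial (μ - Lm md Bg.1) b) := by
  have h1 : insert ((Ef md E μ).min' hne) A.1 ⊆ E := hBg ▸ Bg.2.1
  have h2 : (insert ((Ef md E μ).min' hne) A.1).card = c + 1 := hBg ▸ Bg.2.2
  rw [sb_eval_of_not_mem md A d b hμ hne hm h1 h2]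
  have hBg' : Bg = (⟨insert ((Ef md E μ).min' hne) A.1, h1, h2⟩ : ΛT E (c + 1)) := Subtype.ext hBg
  rw [hBg']

lemma mulVec_single_DT {E : Finset (Fin n)} (c : ℕ) (B : ΛT E (c + 1)) (d : Fin n →₀ ℕ) (b : k) :
    (DT (k := k) md E c).mulVec (Pi.single B (monomial d b)) =
      ∑ e ∈ B.1.attach,
        Pi.single
          (⟨B.1.erase e.1, ⟨(Finset.erase_subset _ _).trans B.2.1,
             by rw [Finset.card_erase_of_mem e.2, B.2.2]; omega⟩⟩ : ΛT E c)
          (monomial (d + Lm md B.1 - Lm md (B.1.erase e.1)) (sgn (B.1.erase e.1) e.1 * b)) := by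
  funext A'
  rw [Matrix.mulVec_single]
  show DT (k := k) md E c A' B * monomial d b = _
  unfold DT
  rw [Finset.sum_mul, ← Finset.sum_attach B.1
    (fun e => (if A'.1 = B.1.erase e then monomial (Lm md B.1 - Lm md A'.1) (sgn A'.1 e) else 0) * monomial d b)]
  rw [Finset.sum_apply]
  apply Finset.sum_congr rfl
  intro e _
  rw [Pi.single_apply]
  by_cases hc : A'.1 = B.1.erase e.1
  · have hc' : A' = (⟨B.1.erase e.1, ⟨(Finset.erase_subset _ _).trans B.2.1,
        by rw [Finset.card_erase_of_mem e.2, B.2.2]; omega⟩⟩ : ΛT E c) := Subtype.ext hc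
    rw [if_pos hc, if_pos hc', monomial_mul]
    congr 1
    · rw [hc]
      rw [add_comm]
      rw [← add_tsub_assoc_of_le (Lm_mono md (hc ▸ hc ▸ (Finset.erase_subset e.1 B.1)) : Lm md (B.1.erase e.1) ≤ Lm md B.1), add_comm]
    · rw [hc]
  · rw [if_neg hc, if_neg (fun hc' => hc (congrArg Subtype.val hc')), zero_mul]


lemma sTh_apply {E : Finset (Fin n)} {c : ℕ} (v : ΛT E c → MvPolynomial (Fin n) k) :
    sTh md E c v = sT md v := rfl

lemma sT_sum {E : Finset (Fin n)} {c : ℕ} {ι : Type} (s : Finset ι)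
    (f : ι → (ΛT E c → MvPolynomial (Fin n) k)) :
    sT md (∑ i ∈ s, f i) = ∑ i ∈ s, sT md (f i) := by
  rw [← sTh_apply, map_sum]
  rfl

lemma sT_mulVec_single {E : Finset (Fin n)} (c : ℕ) (B : ΛT E (c + 1)) (d : Fin n →₀ ℕ) (b : k) :
    sT md ((DT (k := k) md E c).mulVec (Pi.single B (monomial d b))) =
      ∑ e ∈ B.1.attach,
        sb md (⟨B.1.erase e.1, ⟨(Finset.erase_subset _ _).trans B.2.1,
            by rw [Finset.card_erase_of_mem e.2, B.2.2]; omega⟩⟩ : ΛT E c)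
          (d + Lm md B.1 - Lm md (B.1.erase e.1)) (sgn (B.1.erase e.1) e.1 * b) := by
  rw [mulVec_single_DT, sT_sum]
  exact Finset.sum_congr rfl fun e _ => sT_single md _ _ _

lemma single_apply_iff {E : Finset (Fin n)} {c : ℕ} (X : Finset (Fin n)) (h : X ⊆ E ∧ X.card = c)
    (q : MvPolynomial (Fin n) k) (A'' : ΛT E c) :
    (Pi.single (⟨X, h⟩ : ΛT E c) q : ΛT E c → MvPolynomial (Fin n) k) A'' = if A''.1 = X then q else 0 := by
  rw [Pi.single_apply]
  exact if_congr Subtype.ext_iff rfl rfl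

lemma single_decomp {α : Type} [DecidableEq α] (X : α) (p : MvPolynomial (Fin n) k) :
    (Pi.single X p : α → MvPolynomial (Fin n) k) =
      ∑ d ∈ p.support, (Pi.single X (monomial d (coeff d p)) : α → MvPolynomial (Fin n) k) := by
  funext A''
  rw [Finset.sum_apply]
  by_cases hA : A'' = X
  · subst hA
    simp only [Pi.single_eq_same]
    exact (support_sum_monomial_coeff p).symm
  · rw [Pi.single_eq_of_ne hA]
    refine (Finset.sum_eq_zero fun d _ => ?_).symm
    exact Pi.single_eq_of_ne hA _

set_option maxHeartbeats 2000000 in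
theorem homotopy_basis {E : Finset (Fin n)} (c : ℕ) (A : ΛT E (c + 1)) (d : Fin n →₀ ℕ) (b : k) :
    (DT (k := k) md E (c + 1)).mulVec (sT md (Pi.single A (monomial d b)))
      + sT md ((DT (k := k) md E c).mulVec (Pi.single A (monomial d b)))
    = Pi.single A (monomial d b) := by
  have hAne : A.1.Nonempty := Finset.card_pos.mp (by rw [A.2.2]; omega)
  have hLA : Lm md A.1 ≤ d + Lm md A.1 := le_add_self
  have hAE : A.1 ⊆ Ef md E (d + Lm md A.1) :=
    fun f hf => (mem_Ef md).mpr ⟨A.2.1 hf, (le_Lm md hf).trans hLA⟩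
  have hne : (Ef md E (d + Lm md A.1)).Nonempty := hAne.mono hAE
  set μ := d + Lm md A.1 with hμdef
  set e0 := (Ef md E μ).min' hne with he0def
  have he0mem : e0 ∈ Ef md E μ := Finset.min'_mem _ hne
  have he0E : e0 ∈ E := ((mem_Ef md).mp he0mem).1
  have he0μ : md e0 ≤ μ := ((mem_Ef md).mp he0mem).2
  have he0le : ∀ f ∈ A.1, e0 ≤ f := fun f hf => Finset.min'_le _ _ (hAE hf)
  -- compute the second term generically
  rw [sT_single, sT_mulVec_single]
  by_cases he0A : e0 ∈ A.1
  · -- case 1 : e0 ∈ A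
    rw [sb_eval_of_mem md A d b hμdef.symm hne he0A, Matrix.mulVec_zero, zero_add]
    rw [Finset.sum_eq_single_of_mem (⟨e0, he0A⟩ : {x // x ∈ A.1}) (Finset.mem_attach _ _)]
    · have hte : d + Lm md A.1 - Lm md (A.1.erase e0) + Lm md (A.1.erase e0) = μ :=
        tsub_add_cancel_of_le ((Lm_mono md (Finset.erase_subset _ _)).trans hLA)
      rw [sb_eval_of_not_mem md _ _ _ hte hne (Finset.notMem_erase e0 A.1)
        (Finset.insert_subset he0E ((Finset.erase_subset _ _).trans A.2.1))
        (by rw [Finset.card_insert_of_notMem (Finset.notMem_erase e0 A.1),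
              Finset.card_erase_of_mem he0A, A.2.2]; omega)]
      have hins : insert e0 (A.1.erase e0) = A.1 := Finset.insert_erase he0A
      have hsgn : (sgn (A.1.erase e0) e0 : k) = 1 := by
        rw [sgn_erase]
        exact sgn_eq_one fun f hf => not_lt.mpr (he0le f hf)
      funext A''
      rw [single_apply_iff, Pi.single_apply]
      rw [hins]
      rw [if_congr (Iff.rfl) rfl rfl]
      by_cases hc : A''.1 = A.1
      · have hc' : A'' = A := Subtype.ext hc
        rw [if_pos hc, if_pos hc', hsgn, one_mul]
        congr 1
        rw [hμdef, add_tsub_cancel_right]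
      · rw [if_neg hc, if_neg fun hc' => hc (congrArg Subtype.val hc')]
    · intro e _ hnee
      have hee0 : e.1 ≠ e0 := fun hc => hnee (Subtype.ext hc)
      have hte : d + Lm md A.1 - Lm md (A.1.erase e.1) + Lm md (A.1.erase e.1) = μ :=
        tsub_add_cancel_of_le ((Lm_mono md (Finset.erase_subset _ _)).trans hLA)
      exact sb_eval_of_mem md _ _ _ hte hne (Finset.mem_erase.mpr ⟨Ne.symm hee0, he0A⟩)
  · -- case 2 : e0 ∉ A
    have hB0sub : insert e0 A.1 ⊆ E := Finset.insert_subset he0E A.2.1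
    have hB0card : (insert e0 A.1).card = (c + 1) + 1 := by
      rw [Finset.card_insert_of_notMem he0A, A.2.2]
    rw [sb_eval_of_not_mem2 md A d b hμdef.symm hne he0A
      (⟨insert e0 A.1, hB0sub, hB0card⟩ : ΛT E (c + 1 + 1)) (by rw [← he0def])]
    have hLB0 : Lm md (insert e0 A.1) ≤ μ := by
      apply Finset.sup_le
      intro f hf
      rcases Finset.mem_insert.mp hf with rfl | hf
      · exact he0μ
      · exact (le_Lm md hf).trans hLA
    rw [mulVec_single_DT]
    funext A''
    rw [Pi.add_apply, Finset.sum_apply, Finset.sum_apply]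
    have hterm1 : ∀ f : {x // x ∈ insert e0 A.1},
        (Pi.single (⟨(insert e0 A.1).erase f.1, ⟨(Finset.erase_subset _ _).trans hB0sub,
            by rw [Finset.card_erase_of_mem f.2, hB0card]; omega⟩⟩ : ΛT E (c+1))
          (monomial (μ - Lm md (insert e0 A.1) + Lm md (insert e0 A.1) - Lm md ((insert e0 A.1).erase f.1))
            (sgn ((insert e0 A.1).erase f.1) f.1 * b)) : ΛT E (c+1) → MvPolynomial (Fin n) k) A''
        = if A''.1 = (insert e0 A.1).erase f.1 then
            monomial (μ - Lm md ((insert e0 A.1).erase f.1)) (sgn ((insert e0 A.1).erase f.1) f.1 * b) else 0 := by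
      intro f
      rw [single_apply_iff, tsub_add_cancel_of_le hLB0]
    have hterm2 : ∀ e : {x // x ∈ A.1},
        (sb md (⟨A.1.erase e.1, ⟨(Finset.erase_subset _ _).trans A.2.1,
            by rw [Finset.card_erase_of_mem e.2, A.2.2]; omega⟩⟩ : ΛT E c)
          (d + Lm md A.1 - Lm md (A.1.erase e.1)) (sgn (A.1.erase e.1) e.1 * b)) A''
        = if A''.1 = insert e0 (A.1.erase e.1) then
            monomial (μ - Lm md (insert e0 (A.1.erase e.1))) (sgn (A.1.erase e.1) e.1 * b) else 0 := by
      intro e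
      have hte : d + Lm md A.1 - Lm md (A.1.erase e.1) + Lm md (A.1.erase e.1) = μ :=
        tsub_add_cancel_of_le ((Lm_mono md (Finset.erase_subset _ _)).trans hLA)
      have he0e : e0 ∉ A.1.erase e.1 := fun hc => he0A (Finset.mem_of_mem_erase hc)
      rw [sb_eval_of_not_mem2 md _ _ _ hte hne he0e
        (⟨insert e0 (A.1.erase e.1), Finset.insert_subset he0E ((Finset.erase_subset _ _).trans A.2.1),
          by rw [Finset.card_insert_of_notMem he0e, Finset.card_erase_of_mem e.2, A.2.2]; omega⟩ : ΛT E (c+1))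
        (by rw [← he0def])]
      rw [single_apply_iff]
    rw [Finset.sum_congr rfl (fun f _ => hterm1 f), Finset.sum_congr rfl (fun e _ => hterm2 e)]
    rw [Finset.sum_attach (insert e0 A.1) (fun x => if A''.1 = (insert e0 A.1).erase x then
          monomial (μ - Lm md ((insert e0 A.1).erase x)) (sgn ((insert e0 A.1).erase x) x * b) else 0),
        Finset.sum_attach A.1 (fun x => if A''.1 = insert e0 (A.1.erase x) then
          monomial (μ - Lm md (insert e0 (A.1.erase x))) (sgn (A.1.erase x) x * b) else 0)]
    rw [Finset.sum_insert he0A]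
    have hBe0 : (insert e0 A.1).erase e0 = A.1 := Finset.erase_insert he0A
    have hfirst : (if A''.1 = (insert e0 A.1).erase e0 then
          monomial (μ - Lm md ((insert e0 A.1).erase e0)) (sgn ((insert e0 A.1).erase e0) e0 * b) else 0)
        = (Pi.single A (monomial d b) : ΛT E (c+1) → MvPolynomial (Fin n) k) A'' := by
      rw [hBe0]
      have hsgn : (sgn A.1 e0 : k) = 1 := sgn_eq_one fun f hf => not_lt.mpr (he0le f hf)
      have hexp : μ - Lm md A.1 = d := by rw [hμdef, add_tsub_cancel_right]
      rw [hsgn, one_mul, hexp, Pi.single_apply]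
      exact if_congr Subtype.ext_iff.symm rfl rfl
    rw [hfirst]
    have hrest : (∑ x ∈ A.1, (if A''.1 = (insert e0 A.1).erase x then
          monomial (μ - Lm md ((insert e0 A.1).erase x)) (sgn ((insert e0 A.1).erase x) x * b) else 0))
        + ∑ x ∈ A.1, (if A''.1 = insert e0 (A.1.erase x) then
          monomial (μ - Lm md (insert e0 (A.1.erase x))) (sgn (A.1.erase x) x * b) else 0) = 0 := by
      rw [← Finset.sum_add_distrib]
      apply Finset.sum_eq_zero
      intro f hf
      have hB0er : (insert e0 A.1).erase f = insert e0 (A.1.erase f) :=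
        Finset.erase_insert_of_ne (fun hc => he0A (hc ▸ hf))
      rw [hB0er]
      by_cases hc : A''.1 = insert e0 (A.1.erase f)
      · rw [if_pos hc, if_pos hc, ← map_add]
        have he0f : e0 < f := lt_of_le_of_ne (he0le f hf) (fun hc' => he0A (hc' ▸ hf))
        have he0nf : e0 ∉ A.1.erase f := fun hc' => he0A (Finset.mem_of_mem_erase hc')
        rw [sgn_insert_of_lt he0f he0nf]
        have : (-sgn (A.1.erase f) f : k) * b + sgn (A.1.erase f) f * b = 0 := by ring
        rw [this, map_zero]
      · rw [if_neg hc, if_neg hc, add_zero]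
    rw [add_assoc, hrest, add_zero]

set_option maxHeartbeats 2000000 in
theorem homotopy_id {E : Finset (Fin n)} (c : ℕ) (v : ΛT E (c + 1) → MvPolynomial (Fin n) k) :
    (DT (k := k) md E (c + 1)).mulVec (sT md v) + sT md ((DT (k := k) md E c).mulVec v) = v := by
  set T : (ΛT E (c + 1) → MvPolynomial (Fin n) k) →+ (ΛT E (c + 1) → MvPolynomial (Fin n) k) :=
    AddMonoidHom.mk' (fun v => (DT (k := k) md E (c + 1)).mulVec (sT md v)
        + sT md ((DT (k := k) md E c).mulVec v))
      (by
        intro v w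
        simp only [sT_add, Matrix.mulVec_add]
        abel) with hTdef
  show T v = v
  rw [addHom_apply_decomp T v]
  conv_rhs => rw [decomp_singles v]
  refine Finset.sum_congr rfl fun A _ => Finset.sum_congr rfl fun d _ => ?_
  exact homotopy_basis md c A d (coeff d (v A))


def eΛ (E : Finset (Fin n)) : ΛT E 0 := ⟨∅, Finset.empty_subset E, Finset.card_empty⟩

lemma ΛT0_eq (E : Finset (Fin n)) (x : ΛT E 0) : x = eΛ E :=
  Subtype.ext (Finset.card_eq_zero.mp x.2.2)

lemma mulVec_sum {l m : Type} [Fintype m] (M : Matrix l m (MvPolynomial (Fin n) k)) {ι : Type}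
    (s : Finset ι) (g : ι → m → MvPolynomial (Fin n) k) :
    M.mulVec (∑ i ∈ s, g i) = ∑ i ∈ s, M.mulVec (g i) :=
  map_sum (Matrix.mulVecLin M) g s

set_option maxHeartbeats 1000000 in
lemma section0_basis {E : Finset (Fin n)} (d : Fin n →₀ ℕ) (b : k) (hd : ∃ e ∈ E, md e ≤ d) :
    (DT (k := k) md E 0).mulVec (sT md (Pi.single (eΛ E) (monomial d b)))
      = Pi.single (eΛ E) (monomial d b) := by
  have hμ : d + Lm md (eΛ E).1 = d := by
    show d + Lm md ∅ = d
    rw [Lm_empty, add_zero]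
  have hne : (Ef md E d).Nonempty := by
    obtain ⟨e, heE, hed⟩ := hd
    exact ⟨e, (mem_Ef md).mpr ⟨heE, hed⟩⟩
  have hm0 : (Ef md E d).min' hne ∈ Ef md E d := Finset.min'_mem _ hne
  have hm0E : (Ef md E d).min' hne ∈ E := ((mem_Ef md).mp hm0).1
  have hm0d : md ((Ef md E d).min' hne) ≤ d := ((mem_Ef md).mp hm0).2
  rw [sT_single]
  rw [sb_eval_of_not_mem2 md (eΛ E) d b hμ hne (Finset.notMem_empty _)
    (⟨{(Ef md E d).min' hne}, Finset.singleton_subset_iff.mpr hm0E, Finset.card_singleton _⟩ : ΛT E 1)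
    (by show {(Ef md E d).min' hne} = insert ((Ef md E d).min' hne) (eΛ E).1; rfl)]
  funext A''
  have hA'' : A'' = eΛ E := ΛT0_eq E A''
  subst hA''
  simp only [Matrix.mulVec_single, Pi.smul_apply, Matrix.col_apply, op_smul_eq_mul]
  rw [DT_apply_erase md (eΛ E) _ (Finset.mem_singleton_self _)
    (by show (eΛ E).1 = Finset.erase {(Ef md E d).min' hne} ((Ef md E d).min' hne)
        rw [Finset.erase_singleton]; rfl)]
  rw [Pi.single_eq_same]
  have hsgn : (sgn (eΛ E).1 ((Ef md E d).min' hne) : k) = 1 :=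
    sgn_eq_one (fun f hf => absurd hf (Finset.notMem_empty f))
  rw [hsgn, monomial_mul, one_mul]
  refine congrArg (fun dd => monomial dd b) ?_
  show Lm md {(Ef md E d).min' hne} - Lm md (∅ : Finset (Fin n))
      + (d - Lm md {(Ef md E d).min' hne}) = d
  rw [Lm_empty, tsub_zero, add_tsub_cancel_of_le (by rw [Lm_singleton]; exact hm0d)]

lemma section0 {E : Finset (Fin n)} (f : MvPolynomial (Fin n) k)
    (hf : ∀ μ ∈ f.support, ∃ e ∈ E, md e ≤ μ) :
    (DT (k := k) md E 0).mulVec (sT md (Pi.single (eΛ E) f)) = Pi.single (eΛ E) f := by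
  conv_lhs => rw [single_decomp (eΛ E) f, sT_sum, mulVec_sum]
  conv_rhs => rw [single_decomp (eΛ E) f]
  exact Finset.sum_congr rfl fun dd hdd => section0_basis md dd (coeff dd f) (hf dd hdd)

lemma constantCoeff_DT {E : Finset (Fin n)}
    (hmd : ∀ B : Finset (Fin n), B ⊆ E → ∀ e ∈ B, ¬ md e ≤ Lm md (B.erase e))
    (c : ℕ) (A : ΛT E c) (B : ΛT E (c + 1)) :
    constantCoeff (DT (k := k) md E c A B) = 0 := by
  unfold DT
  rw [map_sum]
  apply Finset.sum_eq_zero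
  intro e he
  split_ifs with h
  · rw [constantCoeff_monomial, if_neg]
    intro hc
    have hle : Lm md B.1 ≤ Lm md A.1 := tsub_eq_zero_iff_le.mp hc
    exact hmd B.1 B.2.1 e he ((le_Lm md he).trans (h ▸ hle))
  · rw [map_zero]


section MatrixUtil

variable {S : Type} [CommRing S] [IsDomain S] [Nontrivial S]

/-- column of a matrix -/
def colM {ι κ : Type} (M : Matrix ι κ S) (j : κ) : ι → S := fun i => M i j

lemma colM_mul {ι κ ρ : Type} [Fintype κ] (M : Matrix ι κ S) (N : Matrix κ ρ S) (j : ρ) :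
    colM (M * N) j = M.mulVec (colM N j) := rfl

lemma colM_mulVecLin {ι κ : Type} [Fintype κ] [DecidableEq κ] (M : Matrix ι κ S) (j : κ) :
    colM M j ∈ LinearMap.range (Matrix.mulVecLin M) := by
  refine ⟨Pi.single j 1, ?_⟩
  rw [Matrix.mulVecLin_apply, Matrix.mulVec_single]
  funext i
  simp [colM]

lemma lift_matrix {ι₂ ι₃ : Type} [Fintype ι₃] {κ : Type} (M : Matrix ι₂ ι₃ S)
    (N : Matrix ι₂ κ S) (h : ∀ j : κ, colM N j ∈ LinearMap.range (Matrix.mulVecLin M)) :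
    ∃ X : Matrix ι₃ κ S, M * X = N := by
  choose u hu using fun j => h j
  refine ⟨fun i j => u j i, ?_⟩
  funext i j
  have h2 := congrFun (hu j) i
  rw [Matrix.mulVecLin_apply] at h2
  exact h2

lemma lift_of_exact {ι₁ ι₂ ι₃ κ : Type} [Fintype ι₂] [Fintype ι₃]
    (M1 : Matrix ι₁ ι₂ S) (M2 : Matrix ι₂ ι₃ S)
    (hex : LinearMap.range (Matrix.mulVecLin M2) = LinearMap.ker (Matrix.mulVecLin M1))
    (N : Matrix ι₂ κ S) (hN : M1 * N = 0) : ∃ X : Matrix ι₃ κ S, M2 * X = N := by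
  apply lift_matrix
  intro j
  rw [hex, LinearMap.mem_ker, Matrix.mulVecLin_apply, ← colM_mul]
  rw [hN]
  rfl

lemma mulVec_inj_of_det_ne_zero {ι : Type} [Fintype ι] [DecidableEq ι] (M : Matrix ι ι S)
    (hdet : M.det ≠ 0) : Function.Injective (Matrix.mulVecLin M) := by
  rw [← LinearMap.ker_eq_bot]
  rw [Submodule.eq_bot_iff]
  intro v hv
  rw [LinearMap.mem_ker, Matrix.mulVecLin_apply] at hv
  have h1 : (M.adjugate * M).mulVec v = M.det • v := by
    rw [Matrix.adjugate_mul, Matrix.smul_mulVec, Matrix.one_mulVec]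
  rw [← Matrix.mulVec_mulVec, hv, Matrix.mulVec_zero] at h1
  funext i
  have := congrFun h1.symm i
  simp only [Pi.smul_apply, smul_eq_mul, Pi.zero_apply] at this ⊢
  rcases mul_eq_zero.mp this with h | h
  · exact absurd h hdet
  · exact h

lemma card_le_card_of_inj {ι κ : Type} [Fintype ι] [Fintype κ] [StrongRankCondition S]
    (f : (ι → S) →ₗ[S] (κ → S)) (hf : Function.Injective f) :
    Fintype.card ι ≤ Fintype.card κ := by
  have li : LinearIndependent S (f ∘ (Pi.basisFun S ι)) :=
    (Pi.basisFun S ι).linearIndependent.map' f (LinearMap.ker_eq_bot.mpr hf)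
  have := linearIndependent_le_basis (Pi.basisFun S κ) _ li
  simpa [Cardinal.mk_fintype] using this

end MatrixUtil


section RSide

variable {n : ℕ} {k : Type} [Field k] {I : Ideal (MvPolynomial (Fin n) k)}

/-- the augmentation row of the resolution `R` -/
def ARm (R : MinFreeRes (Fin n) k I) : Matrix Unit (Fin (R.rank 0)) (MvPolynomial (Fin n) k) :=
  Matrix.of fun _ s => R.aug s

lemma matmat (R : MinFreeRes (Fin n) k I) (i : ℕ) : R.mat i * R.mat (i + 1) = 0 := by
  funext s t
  have h : colM (R.mat (i + 1)) t ∈ LinearMap.range (Matrix.mulVecLin (R.mat (i + 1))) :=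
    colM_mulVecLin _ t
  rw [R.exact_succ i] at h
  have h2 : Matrix.mulVecLin (R.mat i) (colM (R.mat (i + 1)) t) = 0 := LinearMap.mem_ker.mp h
  rw [Matrix.mulVecLin_apply] at h2
  exact congrFun h2 s

lemma aug_mat0 (R : MinFreeRes (Fin n) k I) : ARm R * R.mat 0 = 0 := by
  funext u t
  have h : colM (R.mat 0) t ∈ LinearMap.range (Matrix.mulVecLin (R.mat 0)) :=
    colM_mulVecLin _ t
  rw [R.exact_zero] at h
  have h2 : Matrix.mulVecLin (Matrix.of fun (_ : Unit) s => R.aug s) (colM (R.mat 0) t) = 0 :=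
    LinearMap.mem_ker.mp h
  rw [Matrix.mulVecLin_apply] at h2
  exact congrFun h2 u

variable (E : Finset (Fin n)) (md : Fin n → (Fin n →₀ ℕ))

/-- Taylor augmentation row -/
def ATm : Matrix Unit (ΛT E 1) (MvPolynomial (Fin n) k) :=
  Matrix.of fun _ B => DT (k := k) md E 0 (eΛ E) B

lemma ATm_mul_DT : ATm (k := k) E md * DT (k := k) md E 1 = 0 := by
  funext u C
  have h := congrFun (congrFun (DT_mul_DT (k := k) md E 0) (eΛ E)) C
  exact h

/-- the comparison map from the Taylor complex to `R`, one matrix per level -/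
noncomputable def PsiM (R : MinFreeRes (Fin n) k I) :
    ∀ i : ℕ, Matrix (ΛT E (i + 1)) (Fin (R.rank i)) (MvPolynomial (Fin n) k)
  | 0 => fun B t => sT md (Pi.single (eΛ E) (R.aug t)) B
  | (i + 1) => fun B t => sT md (colM (PsiM R i * R.mat i) t) B

variable (R : MinFreeRes (Fin n) k I)

lemma aug_mem (t : Fin (R.rank 0)) : R.aug t ∈ I := by
  have h : R.aug t ∈ Ideal.span (Set.range R.aug) :=
    Ideal.subset_span (Set.mem_range_self t)
  rw [R.span_aug] at h
  exact h

lemma DT0_PsiM0 (hIchar : ∀ f ∈ I, ∀ μ ∈ f.support, ∃ e ∈ E, md e ≤ μ) :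
    DT (k := k) md E 0 * PsiM E md R 0
    = Matrix.of (fun (_ : ΛT E 0) t => R.aug t) := by
  funext A t
  have h := section0 md (R.aug t) (hIchar _ (aug_mem R t))
  have h2 : ((DT (k := k) md E 0).mulVec (sT md (Pi.single (eΛ E) (R.aug t)))) A
      = (Pi.single (eΛ E) (R.aug t) : ΛT E 0 → MvPolynomial (Fin n) k) A := congrFun h A
  have h3 : (DT (k := k) md E 0 * PsiM E md R 0) A t
      = ((DT (k := k) md E 0).mulVec (sT md (Pi.single (eΛ E) (R.aug t)))) A := rfl
  rw [h3, h2, ΛT0_eq E A, Pi.single_eq_same]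
  rfl

lemma chainPsi (hIchar : ∀ f ∈ I, ∀ μ ∈ f.support, ∃ e ∈ E, md e ≤ μ) :
    ∀ i, DT (k := k) md E (i + 1) * PsiM E md R (i + 1) = PsiM E md R i * R.mat i := by
  intro i
  have key : ∀ j, DT (k := k) md E j * (PsiM E md R j * R.mat j) = 0 → 
      DT (k := k) md E (j + 1) * PsiM E md R (j + 1) = PsiM E md R j * R.mat j := by
    intro j hz
    funext B t
    have hcol : colM (PsiM E md R (j + 1)) t = sT md (colM (PsiM E md R j * R.mat j) t) := rfl
    have h1 : (DT (k := k) md E (j + 1) * PsiM E md R (j + 1)) B t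
        = ((DT (k := k) md E (j + 1)).mulVec (sT md (colM (PsiM E md R j * R.mat j) t))) B := rfl
    have hid := homotopy_id md j (colM (PsiM E md R j * R.mat j) t)
    have hzero : (DT (k := k) md E j).mulVec (colM (PsiM E md R j * R.mat j) t) = 0 := by
      rw [← colM_mul, hz]
      rfl
    rw [hzero, sT_zero, add_zero] at hid
    rw [h1, hid]
    rfl
  induction i with
  | zero =>
    apply key
    rw [← Matrix.mul_assoc, DT0_PsiM0 E md R hIchar]
    funext A t
    have : ((Matrix.of fun (_ : ΛT E 0) t => R.aug t) * R.mat 0) A t = (ARm R * R.mat 0) () t := rfl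
    rw [this, aug_mat0]
    rfl
  | succ i ih =>
    apply key
    rw [← Matrix.mul_assoc, ih, Matrix.mul_assoc, matmat, Matrix.mul_zero]

section Phi

lemma phi0_ex (hGen : ∀ B : ΛT E 1, (DT (k := k) md E 0 (eΛ E) B) ∈ I) :
    ∃ Φ0 : Matrix (Fin (R.rank 0)) (ΛT E 1) (MvPolynomial (Fin n) k),
    ARm R * Φ0 = ATm (k := k) E md := by
  apply lift_matrix
  intro B
  have hmem : DT (k := k) md E 0 (eΛ E) B ∈ Ideal.span (Set.range R.aug) := by
    rw [R.span_aug]; exact hGen B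
  obtain ⟨c, hc⟩ := (Submodule.mem_span_range_iff_exists_fun (MvPolynomial (Fin n) k)).mp hmem
  refine ⟨c, ?_⟩
  rw [Matrix.mulVecLin_apply]
  funext u
  show ∑ s, R.aug s * c s = colM (ATm (k := k) E md) B u
  calc ∑ s, R.aug s * c s = ∑ s, c s • R.aug s := by
        apply Finset.sum_congr rfl; intro s _; rw [smul_eq_mul, mul_comm]
    _ = DT (k := k) md E 0 (eΛ E) B := hc
    _ = colM (ATm (k := k) E md) B u := rfl

noncomputable def Phi0 (hGen : ∀ B : ΛT E 1, (DT (k := k) md E 0 (eΛ E) B) ∈ I) : Matrix (Fin (R.rank 0)) (ΛT E 1) (MvPolynomial (Fin n) k) :=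
  Classical.choose (phi0_ex E md R hGen)

lemma Phi0_spec (hGen : ∀ B : ΛT E 1, (DT (k := k) md E 0 (eΛ E) B) ∈ I) : ARm R * Phi0 E md R hGen = ATm (k := k) E md :=
  Classical.choose_spec (phi0_ex E md R hGen)

lemma phi1_ex (hGen : ∀ B : ΛT E 1, (DT (k := k) md E 0 (eΛ E) B) ∈ I) : ∃ X : Matrix (Fin (R.rank 1)) (ΛT E 2) (MvPolynomial (Fin n) k),
    R.mat 0 * X = Phi0 E md R hGen * DT (k := k) md E 1 := by
  apply lift_of_exact (Matrix.of fun (_ : Unit) s => R.aug s) (R.mat 0) R.exact_zero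
  show ARm R * (Phi0 E md R hGen * DT (k := k) md E 1) = 0
  rw [← Matrix.mul_assoc, Phi0_spec, ATm_mul_DT]

noncomputable def PhiF (hGen : ∀ B : ΛT E 1, (DT (k := k) md E 0 (eΛ E) B) ∈ I) : ∀ i : ℕ,
    Σ' q : Matrix (Fin (R.rank i)) (ΛT E (i + 1)) (MvPolynomial (Fin n) k)
         × Matrix (Fin (R.rank (i + 1))) (ΛT E (i + 2)) (MvPolynomial (Fin n) k),
      R.mat i * q.2 = q.1 * DT (k := k) md E (i + 1)
  | 0 => ⟨(Phi0 E md R hGen, Classical.choose (phi1_ex E md R hGen)),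
      Classical.choose_spec (phi1_ex E md R hGen)⟩
  | (i + 1) =>
    let prev := PhiF hGen i
    have hN : R.mat i * (prev.1.2 * DT (k := k) md E (i + 2)) = 0 := by
      rw [← Matrix.mul_assoc, prev.2, Matrix.mul_assoc, DT_mul_DT, Matrix.mul_zero]
    let h := lift_of_exact (R.mat i) (R.mat (i + 1)) (R.exact_succ i) _ hN
    ⟨(prev.1.2, Classical.choose h), Classical.choose_spec h⟩

noncomputable def PhiM (hGen : ∀ B : ΛT E 1, (DT (k := k) md E 0 (eΛ E) B) ∈ I) (i : ℕ) :
    Matrix (Fin (R.rank i)) (ΛT E (i + 1)) (MvPolynomial (Fin n) k) :=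
  (PhiF E md R hGen i).1.1

lemma chainPhi (hGen : ∀ B : ΛT E 1, (DT (k := k) md E 0 (eΛ E) B) ∈ I) (i : ℕ) :
    R.mat i * PhiM E md R hGen (i + 1) = PhiM E md R hGen i * DT (k := k) md E (i + 1) := by
  show R.mat i * (PhiF E md R hGen (i+1)).1.1 = (PhiF E md R hGen i).1.1 * DT (k := k) md E (i + 1)
  exact (PhiF E md R hGen i).2

lemma Phi0_spec' (hGen : ∀ B : ΛT E 1, (DT (k := k) md E 0 (eΛ E) B) ∈ I) : ARm R * PhiM E md R hGen 0 = ATm (k := k) E md := Phi0_spec E md R hGen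

lemma ATm_PsiM0 (hIchar : ∀ f ∈ I, ∀ μ ∈ f.support, ∃ e ∈ E, md e ≤ μ) : ATm (k := k) E md * PsiM E md R 0 = ARm R := by
  funext u t
  have h := congrFun (congrFun (DT0_PsiM0 E md R hIchar) (eΛ E)) t
  exact h

/-- theta for the R side -/
noncomputable def thR (hGen : ∀ B : ΛT E 1, (DT (k := k) md E 0 (eΛ E) B) ∈ I) (i : ℕ) :
    Matrix (Fin (R.rank i)) (Fin (R.rank i)) (MvPolynomial (Fin n) k) :=
  1 - PhiM E md R hGen i * PsiM E md R i

lemma mat_thR (hGen : ∀ B : ΛT E 1, (DT (k := k) md E 0 (eΛ E) B) ∈ I) (hIchar : ∀ f ∈ I, ∀ μ ∈ f.support, ∃ e ∈ E, md e ≤ μ) (i : ℕ) :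
    R.mat i * thR E md R hGen (i + 1) = thR E md R hGen i * R.mat i := by
  unfold thR
  rw [Matrix.mul_sub, Matrix.sub_mul, Matrix.mul_one, Matrix.one_mul]
  congr 1
  rw [← Matrix.mul_assoc, chainPhi, Matrix.mul_assoc, chainPsi E md R hIchar, ← Matrix.mul_assoc]

lemma h0_ex (hGen : ∀ B : ΛT E 1, (DT (k := k) md E 0 (eΛ E) B) ∈ I) (hIchar : ∀ f ∈ I, ∀ μ ∈ f.support, ∃ e ∈ E, md e ≤ μ) : ∃ X : Matrix (Fin (R.rank 1)) (Fin (R.rank 0)) (MvPolynomial (Fin n) k),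
    R.mat 0 * X = thR E md R hGen 0 := by
  apply lift_of_exact (Matrix.of fun (_ : Unit) s => R.aug s) (R.mat 0) R.exact_zero
  show ARm R * thR E md R hGen 0 = 0
  unfold thR
  rw [Matrix.mul_sub, Matrix.mul_one, ← Matrix.mul_assoc, Phi0_spec', ATm_PsiM0 E md R hIchar,
    sub_self]

noncomputable def H0 (hGen : ∀ B : ΛT E 1, (DT (k := k) md E 0 (eΛ E) B) ∈ I) (hIchar : ∀ f ∈ I, ∀ μ ∈ f.support, ∃ e ∈ E, md e ≤ μ) : Matrix (Fin (R.rank 1)) (Fin (R.rank 0)) (MvPolynomial (Fin n) k) :=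
  Classical.choose (h0_ex E md R hGen hIchar)

lemma H0_spec (hGen : ∀ B : ΛT E 1, (DT (k := k) md E 0 (eΛ E) B) ∈ I) (hIchar : ∀ f ∈ I, ∀ μ ∈ f.support, ∃ e ∈ E, md e ≤ μ) : R.mat 0 * H0 E md R hGen hIchar = thR E md R hGen 0 :=
  Classical.choose_spec (h0_ex E md R hGen hIchar)

lemma h1_ex (hGen : ∀ B : ΛT E 1, (DT (k := k) md E 0 (eΛ E) B) ∈ I) (hIchar : ∀ f ∈ I, ∀ μ ∈ f.support, ∃ e ∈ E, md e ≤ μ) : ∃ X : Matrix (Fin (R.rank 2)) (Fin (R.rank 1)) (MvPolynomial (Fin n) k),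
    R.mat 1 * X = thR E md R hGen 1 - H0 E md R hGen hIchar * R.mat 0 := by
  apply lift_of_exact (R.mat 0) (R.mat 1) (R.exact_succ 0)
  rw [Matrix.mul_sub, ← Matrix.mul_assoc, H0_spec, mat_thR E md R hGen hIchar 0, sub_self]

noncomputable def HF (hGen : ∀ B : ΛT E 1, (DT (k := k) md E 0 (eΛ E) B) ∈ I) (hIchar : ∀ f ∈ I, ∀ μ ∈ f.support, ∃ e ∈ E, md e ≤ μ) : ∀ i : ℕ,
    Σ' q : Matrix (Fin (R.rank (i + 1))) (Fin (R.rank i)) (MvPolynomial (Fin n) k)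
         × Matrix (Fin (R.rank (i + 2))) (Fin (R.rank (i + 1))) (MvPolynomial (Fin n) k),
      R.mat (i + 1) * q.2 = thR E md R hGen (i + 1) - q.1 * R.mat i
  | 0 => ⟨(H0 E md R hGen hIchar, Classical.choose (h1_ex E md R hGen hIchar)),
      Classical.choose_spec (h1_ex E md R hGen hIchar)⟩
  | (i + 1) =>
    let prev := HF hGen hIchar i
    have hN : R.mat (i + 1) * (thR E md R hGen (i + 2) - prev.1.2 * R.mat (i + 1)) = 0 := by
      rw [Matrix.mul_sub, ← Matrix.mul_assoc, prev.2, mat_thR E md R hGen hIchar (i + 1),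
        Matrix.sub_mul, Matrix.mul_assoc, matmat, Matrix.mul_zero, sub_zero, sub_self]
    let h := lift_of_exact (R.mat (i + 1)) (R.mat (i + 2)) (R.exact_succ (i + 1)) _ hN
    ⟨(prev.1.2, Classical.choose h), Classical.choose_spec h⟩

noncomputable def Hm (hGen : ∀ B : ΛT E 1, (DT (k := k) md E 0 (eΛ E) B) ∈ I) (hIchar : ∀ f ∈ I, ∀ μ ∈ f.support, ∃ e ∈ E, md e ≤ μ) (i : ℕ) :
    Matrix (Fin (R.rank (i + 1))) (Fin (R.rank i)) (MvPolynomial (Fin n) k) :=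
  (HF E md R hGen hIchar i).1.1

lemma Hm_zero_spec (hGen : ∀ B : ΛT E 1, (DT (k := k) md E 0 (eΛ E) B) ∈ I) (hIchar : ∀ f ∈ I, ∀ μ ∈ f.support, ∃ e ∈ E, md e ≤ μ) :
    R.mat 0 * Hm E md R hGen hIchar 0 = thR E md R hGen 0 := H0_spec E md R hGen hIchar

lemma Hm_succ_spec (hGen : ∀ B : ΛT E 1, (DT (k := k) md E 0 (eΛ E) B) ∈ I) (hIchar : ∀ f ∈ I, ∀ μ ∈ f.support, ∃ e ∈ E, md e ≤ μ) (i : ℕ) :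
    R.mat (i + 1) * Hm E md R hGen hIchar (i + 1)
      = thR E md R hGen (i + 1) - Hm E md R hGen hIchar i * R.mat i := by
  show R.mat (i + 1) * (HF E md R hGen hIchar (i + 1)).1.1
      = thR E md R hGen (i + 1) - (HF E md R hGen hIchar i).1.1 * R.mat i
  exact (HF E md R hGen hIchar i).2

/-- theta for the Taylor side -/
noncomputable def thT (hGen : ∀ B : ΛT E 1, (DT (k := k) md E 0 (eΛ E) B) ∈ I) (i : ℕ) :
    Matrix (ΛT E (i + 1)) (ΛT E (i + 1)) (MvPolynomial (Fin n) k) :=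
  1 - PsiM E md R i * PhiM E md R hGen i

lemma lift_taylor {c : ℕ} {κ : Type} [Fintype κ]
    (N : Matrix (ΛT E (c + 1)) κ (MvPolynomial (Fin n) k))
    (hN : DT (k := k) md E c * N = 0) :
    ∃ X : Matrix (ΛT E (c + 2)) κ (MvPolynomial (Fin n) k),
      DT (k := k) md E (c + 1) * X = N := by
  refine ⟨fun Bp j => sT md (colM N j) Bp, ?_⟩
  funext B j
  have hz : (DT (k := k) md E c).mulVec (colM N j) = 0 := by
    rw [← colM_mul, hN]; rfl
  have hid := homotopy_id md c (colM N j)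
  rw [hz, sT_zero, add_zero] at hid
  exact (congrFun hid B : _)

lemma DT_thT_comm (hGen : ∀ B : ΛT E 1, (DT (k := k) md E 0 (eΛ E) B) ∈ I) (hIchar : ∀ f ∈ I, ∀ μ ∈ f.support, ∃ e ∈ E, md e ≤ μ) (i : ℕ) :
    DT (k := k) md E (i + 1) * thT E md R hGen (i + 1)
      = thT E md R hGen i * DT (k := k) md E (i + 1) := by
  unfold thT
  rw [Matrix.mul_sub, Matrix.sub_mul, Matrix.mul_one, Matrix.one_mul]
  congr 1
  rw [← Matrix.mul_assoc, chainPsi E md R hIchar, Matrix.mul_assoc, chainPhi, ← Matrix.mul_assoc]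

lemma DT0_thT0 (hGen : ∀ B : ΛT E 1, (DT (k := k) md E 0 (eΛ E) B) ∈ I) (hIchar : ∀ f ∈ I, ∀ μ ∈ f.support, ∃ e ∈ E, md e ≤ μ) : DT (k := k) md E 0 * thT E md R hGen 0 = 0 := by
  unfold thT
  rw [Matrix.mul_sub, Matrix.mul_one, ← Matrix.mul_assoc, DT0_PsiM0 E md R hIchar]
  have h3 : (Matrix.of fun (_ : ΛT E 0) t => R.aug t) * PhiM E md R hGen 0
      = DT (k := k) md E 0 := by
    funext A B
    have h := congrFun (congrFun (Phi0_spec' E md R hGen) ()) B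
    have h2 : ((Matrix.of fun (_ : ΛT E 0) t => R.aug t) * PhiM E md R hGen 0) A B
        = (ARm R * PhiM E md R hGen 0) () B := rfl
    rw [h2, h]
    show ATm (k := k) E md () B = DT (k := k) md E 0 A B
    rw [ΛT0_eq E A]
    rfl
  rw [h3, sub_self]

lemma ht0_ex (hGen : ∀ B : ΛT E 1, (DT (k := k) md E 0 (eΛ E) B) ∈ I) (hIchar : ∀ f ∈ I, ∀ μ ∈ f.support, ∃ e ∈ E, md e ≤ μ) : ∃ X : Matrix (ΛT E 2) (ΛT E 1) (MvPolynomial (Fin n) k),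
    DT (k := k) md E 1 * X = thT E md R hGen 0 :=
  lift_taylor E md _ (DT0_thT0 E md R hGen hIchar)

noncomputable def HT0 (hGen : ∀ B : ΛT E 1, (DT (k := k) md E 0 (eΛ E) B) ∈ I) (hIchar : ∀ f ∈ I, ∀ μ ∈ f.support, ∃ e ∈ E, md e ≤ μ) : Matrix (ΛT E 2) (ΛT E 1) (MvPolynomial (Fin n) k) :=
  Classical.choose (ht0_ex E md R hGen hIchar)

lemma HT0_spec (hGen : ∀ B : ΛT E 1, (DT (k := k) md E 0 (eΛ E) B) ∈ I) (hIchar : ∀ f ∈ I, ∀ μ ∈ f.support, ∃ e ∈ E, md e ≤ μ) :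
    DT (k := k) md E 1 * HT0 E md R hGen hIchar = thT E md R hGen 0 :=
  Classical.choose_spec (ht0_ex E md R hGen hIchar)

lemma ht1_ex (hGen : ∀ B : ΛT E 1, (DT (k := k) md E 0 (eΛ E) B) ∈ I) (hIchar : ∀ f ∈ I, ∀ μ ∈ f.support, ∃ e ∈ E, md e ≤ μ) : ∃ X : Matrix (ΛT E 3) (ΛT E 2) (MvPolynomial (Fin n) k),
    DT (k := k) md E 2 * X = thT E md R hGen 1 - HT0 E md R hGen hIchar * DT (k := k) md E 1 := by
  apply lift_taylor
  rw [Matrix.mul_sub, ← Matrix.mul_assoc, HT0_spec, DT_thT_comm E md R hGen hIchar 0, sub_self]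

noncomputable def HTF (hGen : ∀ B : ΛT E 1, (DT (k := k) md E 0 (eΛ E) B) ∈ I) (hIchar : ∀ f ∈ I, ∀ μ ∈ f.support, ∃ e ∈ E, md e ≤ μ) : ∀ i : ℕ,
    Σ' q : Matrix (ΛT E (i + 2)) (ΛT E (i + 1)) (MvPolynomial (Fin n) k)
         × Matrix (ΛT E (i + 3)) (ΛT E (i + 2)) (MvPolynomial (Fin n) k),
      DT (k := k) md E (i + 2) * q.2 = thT E md R hGen (i + 1) - q.1 * DT (k := k) md E (i + 1)
  | 0 => ⟨(HT0 E md R hGen hIchar, Classical.choose (ht1_ex E md R hGen hIchar)),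
      Classical.choose_spec (ht1_ex E md R hGen hIchar)⟩
  | (i + 1) =>
    let prev := HTF hGen hIchar i
    have hN : DT (k := k) md E (i + 2)
        * (thT E md R hGen (i + 2) - prev.1.2 * DT (k := k) md E (i + 2)) = 0 := by
      rw [Matrix.mul_sub, ← Matrix.mul_assoc, prev.2, DT_thT_comm E md R hGen hIchar (i + 1),
        Matrix.sub_mul, Matrix.mul_assoc, DT_mul_DT, Matrix.mul_zero, sub_zero, sub_self]
    let h := lift_taylor E md _ hN
    ⟨(prev.1.2, Classical.choose h), Classical.choose_spec h⟩

noncomputable def HTm (hGen : ∀ B : ΛT E 1, (DT (k := k) md E 0 (eΛ E) B) ∈ I) (hIchar : ∀ f ∈ I, ∀ μ ∈ f.support, ∃ e ∈ E, md e ≤ μ) (i : ℕ) :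
    Matrix (ΛT E (i + 2)) (ΛT E (i + 1)) (MvPolynomial (Fin n) k) :=
  (HTF E md R hGen hIchar i).1.1

lemma HTm_zero_spec (hGen : ∀ B : ΛT E 1, (DT (k := k) md E 0 (eΛ E) B) ∈ I) (hIchar : ∀ f ∈ I, ∀ μ ∈ f.support, ∃ e ∈ E, md e ≤ μ) :
    DT (k := k) md E 1 * HTm E md R hGen hIchar 0 = thT E md R hGen 0 :=
  HT0_spec E md R hGen hIchar

lemma HTm_succ_spec (hGen : ∀ B : ΛT E 1, (DT (k := k) md E 0 (eΛ E) B) ∈ I) (hIchar : ∀ f ∈ I, ∀ μ ∈ f.support, ∃ e ∈ E, md e ≤ μ) (i : ℕ) :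
    DT (k := k) md E (i + 2) * HTm E md R hGen hIchar (i + 1)
      = thT E md R hGen (i + 1) - HTm E md R hGen hIchar i * DT (k := k) md E (i + 1) := by
  show DT (k := k) md E (i + 2) * (HTF E md R hGen hIchar (i + 1)).1.1
      = thT E md R hGen (i + 1) - (HTF E md R hGen hIchar i).1.1 * DT (k := k) md E (i + 1)
  exact (HTF E md R hGen hIchar i).2

lemma cc_one_of_theta {ι : Type} [Fintype ι] [DecidableEq ι]
    (M : Matrix ι ι (MvPolynomial (Fin n) k))
    (h : ((1 : Matrix ι ι (MvPolynomial (Fin n) k)) - M).map constantCoeff = 0) :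
    M.map constantCoeff = (1 : Matrix ι ι k) := by
  funext i j
  have h2 := congrFun (congrFun h i) j
  simp only [Matrix.map_apply, Matrix.sub_apply, Matrix.zero_apply, map_sub] at h2
  have h3 : constantCoeff (M i j)
      = constantCoeff ((1 : Matrix ι ι (MvPolynomial (Fin n) k)) i j) := by
    exact (sub_eq_zero.mp h2).symm
  rw [Matrix.map_apply, h3]
  by_cases hij : i = j
  · subst hij
    simp [Matrix.one_apply_eq]
  · simp [Matrix.one_apply_ne hij]

lemma mapCC_add {ι κ : Type} (A B : Matrix ι κ (MvPolynomial (Fin n) k)) :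
    (A + B).map constantCoeff = A.map constantCoeff + B.map constantCoeff := by
  funext a b
  simp [Matrix.map_apply]

lemma cc_mat_zero (i : ℕ) : (R.mat i).map constantCoeff = (0 : Matrix _ _ k) := by
  funext s t
  simp only [Matrix.map_apply, Matrix.zero_apply]
  exact R.minimal i s t

lemma cc_DT_zero (hmd : ∀ B : Finset (Fin n), B ⊆ E → ∀ e ∈ B, ¬ md e ≤ Lm md (B.erase e)) (c : ℕ) :
    (DT (k := k) md E c).map constantCoeff = (0 : Matrix _ _ k) := by
  funext A B
  simp only [Matrix.map_apply, Matrix.zero_apply]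
  exact constantCoeff_DT md hmd c A B

lemma cc_thR_zero (hGen : ∀ B : ΛT E 1, (DT (k := k) md E 0 (eΛ E) B) ∈ I) (hIchar : ∀ f ∈ I, ∀ μ ∈ f.support, ∃ e ∈ E, md e ≤ μ) (i : ℕ) :
    (thR E md R hGen i).map constantCoeff = (0 : Matrix _ _ k) := by
  cases i with
  | zero =>
    rw [← Hm_zero_spec E md R hGen hIchar, Matrix.map_mul, cc_mat_zero, Matrix.zero_mul]
  | succ i =>
    have hspec := Hm_succ_spec E md R hGen hIchar i
    rw [eq_sub_iff_add_eq] at hspec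
    rw [← hspec, mapCC_add, Matrix.map_mul, Matrix.map_mul, cc_mat_zero, cc_mat_zero,
      Matrix.zero_mul, Matrix.mul_zero, add_zero]

lemma cc_thT_zero (hGen : ∀ B : ΛT E 1, (DT (k := k) md E 0 (eΛ E) B) ∈ I) (hIchar : ∀ f ∈ I, ∀ μ ∈ f.support, ∃ e ∈ E, md e ≤ μ) (hmd : ∀ B : Finset (Fin n), B ⊆ E → ∀ e ∈ B, ¬ md e ≤ Lm md (B.erase e)) (i : ℕ) :
    (thT E md R hGen i).map constantCoeff = (0 : Matrix _ _ k) := by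
  cases i with
  | zero =>
    rw [← HTm_zero_spec E md R hGen hIchar, Matrix.map_mul, cc_DT_zero E md hmd, Matrix.zero_mul]
  | succ i =>
    have hspec := HTm_succ_spec E md R hGen hIchar i
    rw [eq_sub_iff_add_eq] at hspec
    rw [← hspec, mapCC_add, Matrix.map_mul, Matrix.map_mul, cc_DT_zero E md hmd,
      cc_DT_zero E md hmd, Matrix.zero_mul, Matrix.mul_zero, add_zero]

lemma cc_PhiPsi (hGen : ∀ B : ΛT E 1, (DT (k := k) md E 0 (eΛ E) B) ∈ I) (hIchar : ∀ f ∈ I, ∀ μ ∈ f.support, ∃ e ∈ E, md e ≤ μ) (i : ℕ) :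
    (PhiM E md R hGen i * PsiM E md R i).map constantCoeff = 1 :=
  cc_one_of_theta _ (cc_thR_zero E md R hGen hIchar i)

lemma cc_PsiPhi (hGen : ∀ B : ΛT E 1, (DT (k := k) md E 0 (eΛ E) B) ∈ I) (hIchar : ∀ f ∈ I, ∀ μ ∈ f.support, ∃ e ∈ E, md e ≤ μ) (hmd : ∀ B : Finset (Fin n), B ⊆ E → ∀ e ∈ B, ¬ md e ≤ Lm md (B.erase e)) (i : ℕ) :
    (PsiM E md R i * PhiM E md R hGen i).map constantCoeff = 1 :=
  cc_one_of_theta _ (cc_thT_zero E md R hGen hIchar hmd i)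

lemma inj_of_cc {ι : Type} [Fintype ι] [DecidableEq ι]
    (M : Matrix ι ι (MvPolynomial (Fin n) k)) (h : M.map constantCoeff = (1 : Matrix ι ι k)) :
    Function.Injective (Matrix.mulVecLin M) := by
  apply mulVec_inj_of_det_ne_zero
  intro h0
  have hd := RingHom.map_det (constantCoeff : MvPolynomial (Fin n) k →+* k) M
  rw [h0, map_zero, RingHom.mapMatrix_apply, h, Matrix.det_one] at hd
  exact zero_ne_one hd

lemma rank_eq (hGen : ∀ B : ΛT E 1, (DT (k := k) md E 0 (eΛ E) B) ∈ I) (hIchar : ∀ f ∈ I, ∀ μ ∈ f.support, ∃ e ∈ E, md e ≤ μ) (hmd : ∀ B : Finset (Fin n), B ⊆ E → ∀ e ∈ B, ¬ md e ≤ Lm md (B.erase e)) (i : ℕ) : R.rank i = Fintype.card (ΛT E (i + 1)) := by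
  have injPP := inj_of_cc _ (cc_PhiPsi E md R hGen hIchar i)
  have injQQ := inj_of_cc _ (cc_PsiPhi E md R hGen hIchar hmd i)
  have hcompP : Matrix.mulVecLin (PhiM E md R hGen i * PsiM E md R i)
      = (Matrix.mulVecLin (PhiM E md R hGen i)).comp (Matrix.mulVecLin (PsiM E md R i)) :=
    Matrix.mulVecLin_mul _ _
  have hcompQ : Matrix.mulVecLin (PsiM E md R i * PhiM E md R hGen i)
      = (Matrix.mulVecLin (PsiM E md R i)).comp (Matrix.mulVecLin (PhiM E md R hGen i)) :=
    Matrix.mulVecLin_mul _ _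
  have injPsi : Function.Injective (Matrix.mulVecLin (PsiM E md R i)) := by
    apply Function.Injective.of_comp (f := ⇑(Matrix.mulVecLin (PhiM E md R hGen i)))
    rw [← LinearMap.coe_comp, ← hcompP]
    exact injPP
  have injPhi : Function.Injective (Matrix.mulVecLin (PhiM E md R hGen i)) := by
    apply Function.Injective.of_comp (f := ⇑(Matrix.mulVecLin (PsiM E md R i)))
    rw [← LinearMap.coe_comp, ← hcompQ]
    exact injQQ
  have h1 := card_le_card_of_inj (Matrix.mulVecLin (PsiM E md R i)) injPsi
  have h2 := card_le_card_of_inj (Matrix.mulVecLin (PhiM E md R hGen i)) injPhi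
  rw [Fintype.card_fin] at h1 h2
  exact le_antisymm h1 h2

end Phi

lemma ΛT_isEmpty {c : ℕ} (h : E.card < c) : IsEmpty (ΛT E c) :=
  ⟨fun A => absurd (A.2.2 ▸ Finset.card_le_card A.2.1) (by omega)⟩

lemma ΛT_nonempty {c : ℕ} (h : c ≤ E.card) : Nonempty (ΛT E c) := by
  obtain ⟨t, hsub, hcard⟩ := Finset.exists_subset_card_eq h
  exact ⟨⟨t, hsub, hcard⟩⟩

lemma Lm_apply_le (X : Finset (Fin n)) (e : Fin n) (m : ℕ) (h : ∀ f ∈ X, md f e ≤ m) :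
    (Lm md X) e ≤ m := by
  classical
  induction X using Finset.induction_on with
  | empty =>
    rw [Lm_empty]
    exact Nat.zero_le m
  | insert _ _ hx ih =>
    rename_i a s
    rw [show Lm md (insert a s) = md a ⊔ Lm md s from Finset.sup_insert]
    rw [Finsupp.sup_apply]
    exact sup_le (h a (Finset.mem_insert_self a s)) (ih fun f hf => h f (Finset.mem_insert_of_mem hf))

end RSide
end
end Stmt13Aux

/-- Theorem 3.3: the edge ideal `I(D) = (x_i x_j^{w_j} : x_i → x_j ∈ E(D))` of a
weighted rooted forest `D` (encoded by a parent function `p`, acyclic by virtue of a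
height function, with all edges oriented away from the roots) with all weights `≥ 2`
and at least one edge satisfies `pd(I(D)) = |E(D)| - 1`, i.e. `pd(I(D)) + 1 = |E(D)|`. -/
theorem stmt13 (k : Type) [Field k] (n : ℕ)
    (p : Fin n → Option (Fin n)) (ht : Fin n → ℕ)
    (hforest : ∀ u v : Fin n, p v = some u → ht u < ht v)
    (w : Fin n → ℕ) (hw : ∀ i, 2 ≤ w i)
    (E : Finset (Fin n)) (hE : E = Finset.univ.filter fun v => (p v).isSome)
    (hEne : E.Nonempty)
    (I : Ideal (MvPolynomial (Fin n) k))
    (hI : I = Ideal.span {f | ∃ u v : Fin n, p v = some u ∧ f = X u * X v ^ w v})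
    (R : MinFreeRes (Fin n) k I) :
    R.pd + 1 = E.card := by
  classical
  open Stmt13Aux in
  set md : Fin n → (Fin n →₀ ℕ) :=
    fun v => Finsupp.single ((p v).getD v) 1 + Finsupp.single v (w v) with hmddef
  have hXmon : ∀ u v : Fin n, (X u * X v ^ w v : MvPolynomial (Fin n) k)
      = monomial (Finsupp.single u 1 + Finsupp.single v (w v)) 1 := by
    intro u v
    rw [X_pow_eq_monomial, X, monomial_mul, one_mul]
  have hIμ : I = Ideal.span ((fun s => monomial s (1 : k)) '' (md '' ↑E)) := by
    rw [hI]
    congr 1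
    ext f
    constructor
    · rintro ⟨u, v, hpv, rfl⟩
      have hvE : v ∈ E := by
        rw [hE]
        simp only [Finset.mem_filter, Finset.mem_univ, true_and]
        rw [hpv]
        rfl
      refine ⟨md v, ⟨v, hvE, rfl⟩, ?_⟩
      rw [hXmon]
      have : md v = Finsupp.single u 1 + Finsupp.single v (w v) := by
        rw [hmddef]
        simp only [hpv, Option.getD_some]
      rw [this]
    · rintro ⟨d, ⟨v, hv, rfl⟩, rfl⟩
      have hvE : v ∈ E := hv
      have hsome : (p v).isSome := by
        rw [hE] at hvE
        exact (Finset.mem_filter.mp hvE).2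
      obtain ⟨u, hu⟩ := Option.isSome_iff_exists.mp hsome
      refine ⟨u, v, hu, ?_⟩
      rw [hXmon]
      have : md v = Finsupp.single u 1 + Finsupp.single v (w v) := by
        rw [hmddef]
        simp only [hu, Option.getD_some]
      rw [this]
  have hIchar : ∀ f ∈ I, ∀ μ ∈ f.support, ∃ e ∈ E, md e ≤ μ := by
    intro f hf μ hμ
    rw [hIμ] at hf
    obtain ⟨si, hsi, hle⟩ := MvPolynomial.mem_ideal_span_monomial_image.mp hf μ hμ
    obtain ⟨v, hv, rfl⟩ := hsi
    exact ⟨v, hv, hle⟩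
  have hmd : ∀ B : Finset (Fin n), B ⊆ E → ∀ e ∈ B, ¬ md e ≤ Stmt13Aux.Lm md (B.erase e) := by
    intro B hBE e heB hle
    have h1 : 2 ≤ md e e := by
      have h1a : md e e = Finsupp.single ((p e).getD e) 1 e + Finsupp.single e (w e) e := rfl
      rw [h1a, Finsupp.single_eq_same]
      have := hw e
      omega
    have h2 : (Stmt13Aux.Lm md (B.erase e)) e ≤ 1 := by
      apply Stmt13Aux.Lm_apply_le
      intro f hf
      have hfe : f ≠ e := Finset.ne_of_mem_erase hf
      show Finsupp.single ((p f).getD f) 1 e + Finsupp.single f (w f) e ≤ 1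
      rw [Finsupp.single_apply, Finsupp.single_apply, if_neg hfe]
      split_ifs <;> omega
    have := hle e
    omega
  have hGen : ∀ B : Stmt13Aux.ΛT E 1, (Stmt13Aux.DT (k := k) md E 0 (Stmt13Aux.eΛ E) B) ∈ I := by
    intro B
    obtain ⟨e, he⟩ := Finset.card_eq_one.mp B.2.2
    have heE : e ∈ E := B.2.1 (he ▸ Finset.mem_singleton_self e)
    have hDT : Stmt13Aux.DT (k := k) md E 0 (Stmt13Aux.eΛ E) B
        = monomial (Stmt13Aux.Lm md B.1) 1 := by
      rw [Stmt13Aux.DT_apply_erase md (Stmt13Aux.eΛ E) B (e := e)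
        (by rw [he]; exact Finset.mem_singleton_self e)
        (by show (Stmt13Aux.eΛ E).1 = B.1.erase e; rw [he, Finset.erase_singleton]; rfl)]
      have hLe : Stmt13Aux.Lm md (Stmt13Aux.eΛ E).1 = 0 := Stmt13Aux.Lm_empty md
      rw [hLe, tsub_zero,
        show (Stmt13Aux.sgn (Stmt13Aux.eΛ E).1 e : k) = 1 from
          Stmt13Aux.sgn_eq_one (fun f hf => absurd hf (Finset.notMem_empty f))]
    rw [hDT, hIμ]
    apply Ideal.subset_span
    refine ⟨md e, ⟨e, heE, rfl⟩, ?_⟩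
    rw [he, Stmt13Aux.Lm_singleton]
  have hrank : ∀ i, R.rank i = Fintype.card (Stmt13Aux.ΛT E (i + 1)) :=
    fun i => Stmt13Aux.rank_eq E md R hGen hIchar hmd i
  have hr1 : 1 ≤ E.card := Finset.Nonempty.card_pos hEne
  have hset : {i | R.rank i ≠ 0} = Set.Iic (E.card - 1) := by
    ext i
    simp only [Set.mem_setOf_eq, Set.mem_Iic]
    rw [hrank i]
    constructor
    · intro h
      by_contra hc
      push_neg at hc
      have hemp : IsEmpty (Stmt13Aux.ΛT E (i + 1)) := Stmt13Aux.ΛT_isEmpty E (by omega)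
      exact h Fintype.card_eq_zero
    · intro h
      have hne : Nonempty (Stmt13Aux.ΛT E (i + 1)) := Stmt13Aux.ΛT_nonempty E (by omega)
      have := Fintype.card_pos_iff.mpr hne
      omega
  show sSup {i | R.rank i ≠ 0} + 1 = E.card
  rw [hset, csSup_Iic]
  omega
end

section
/- Let n ≥ 3, let w₁,…,w_n ≥ 2 be integers, and let I = (x₁x₂^{w₂}, x₂x₃^{w₃}, …, x_{n−1}x_n^{w_n}, x_n x₁^{w₁}) in S = k[x₁,…,x_n]. Then depth(I) = 1 as a graded S-module. -/
open MvPolynomial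

variable {σ k : Type} [Field k] {I : Ideal (MvPolynomial σ k)}

namespace Stmt18Aux

variable {k : Type} [Field k] {n : ℕ}

noncomputable def gexp (n : ℕ) (w : Fin n → ℕ) (i : Fin n) : Fin n →₀ ℕ :=
  Finsupp.single i 1 + Finsupp.single (finRotate n i) (w (finRotate n i))

noncomputable def vexp (n : ℕ) (w : Fin n → ℕ) : Fin n →₀ ℕ :=
  Finsupp.equivFunOnFinite.symm (fun i => w i - 1)

lemma vexp_apply (w : Fin n → ℕ) (i : Fin n) : vexp n w i = w i - 1 := rfl

lemma gen_eq (w : Fin n → ℕ) (i : Fin n) :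
    (X i * X (finRotate n i) ^ w (finRotate n i) : MvPolynomial (Fin n) k)
      = monomial (gexp n w i) 1 := by
  rw [X_pow_eq_monomial, X, monomial_mul, one_mul, gexp]

lemma rotate_ne (hn : 3 ≤ n) (i : Fin n) : finRotate n i ≠ i := by
  obtain ⟨m, rfl⟩ : ∃ m, n = m + 3 := ⟨n - 3, by omega⟩
  simp only [finRotate_succ_apply]
  intro h
  have h2 : (1 : Fin (m + 2 + 1)) = 0 := by
    have := congrArg (· - i) h
    simpa [add_comm, add_sub_cancel_right] using this
  have := congrArg Fin.val h2
  simp [Fin.val_one] at this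

lemma mulv (hn : 3 ≤ n) (w : Fin n → ℕ) (hw : ∀ i, 2 ≤ w i) (j : Fin n) :
    (X j * monomial (vexp n w) 1 : MvPolynomial (Fin n) k)
      ∈ Ideal.span ((fun s => monomial s (1 : k)) '' Set.range (gexp n w)) := by
  obtain ⟨i0, hi0⟩ := (finRotate n).surjective j
  have hne : i0 ≠ j := fun h => rotate_ne hn i0 (hi0.trans h.symm)
  have key : (X j * monomial (vexp n w) 1 : MvPolynomial (Fin n) k)
      = monomial (gexp n w i0) 1 * monomial (vexp n w + Finsupp.single j 1 - gexp n w i0) 1 := by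
    have heq : Finsupp.single j 1 + vexp n w
        = gexp n w i0 + (vexp n w + Finsupp.single j 1 - gexp n w i0) := by
      ext i
      have h1 := hw i0
      have h2 := hw j
      have h3 := hw i
      simp only [gexp, hi0, vexp, Finsupp.add_apply, Finsupp.tsub_apply,
        Finsupp.single_apply, Finsupp.coe_equivFunOnFinite_symm]
      rcases eq_or_ne i0 i with rfl | hi0i
      · simp only [if_neg (Ne.symm hne), if_pos rfl, eq_self_iff_true, if_true]
        omega
      · rcases eq_or_ne j i with rfl | hji
        · simp only [if_pos rfl, if_neg hne, eq_self_iff_true, if_true]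
          omega
        · simp only [if_neg hji, if_neg hi0i]
          omega
    rw [X, monomial_mul, monomial_mul, one_mul, heq]
  rw [key]
  exact Ideal.mul_mem_right _ _ (Ideal.subset_span ⟨gexp n w i0, ⟨i0, rfl⟩, rfl⟩)

lemma v_notin (hn : 3 ≤ n) (w : Fin n → ℕ) (hw : ∀ i, 2 ≤ w i) :
    (monomial (vexp n w) 1 : MvPolynomial (Fin n) k)
      ∉ Ideal.span ((fun s => monomial s (1 : k)) '' Set.range (gexp n w)) := by
  intro h
  rw [mem_ideal_span_monomial_image] at h
  have hsupp : vexp n w ∈ (monomial (vexp n w) (1 : k)).support := by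
    classical
    rw [support_monomial, if_neg one_ne_zero]
    exact Finset.mem_singleton_self _
  obtain ⟨si, ⟨i, rfl⟩, hle⟩ := h _ hsupp
  have := hle (finRotate n i)
  have h1 := hw (finRotate n i)
  rw [vexp_apply] at this
  simp only [gexp, Finsupp.add_apply, Finsupp.single_apply, if_neg (Ne.symm (rotate_ne hn i)), if_pos rfl, if_true, zero_add] at this
  omega

lemma mulmem (hn : 3 ≤ n) (w : Fin n → ℕ) (hw : ∀ i, 2 ≤ w i)
    (g : MvPolynomial (Fin n) k) (hg : constantCoeff g = 0) :
    g * monomial (vexp n w) 1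
      ∈ Ideal.span ((fun s => monomial s (1 : k)) '' Set.range (gexp n w)) := by
  have hgmem : g ∈ Ideal.span (MvPolynomial.X '' (Set.univ : Set (Fin n))
      : Set (MvPolynomial (Fin n) k)) := by
    rw [mem_ideal_span_X_image]
    intro m hm
    by_contra hc
    push_neg at hc
    have hm0 : m = 0 := by
      ext i; exact hc i (Set.mem_univ i)
    rw [mem_support_iff, hm0] at hm
    rw [constantCoeff_eq] at hg
    exact hm hg
  refine Submodule.span_induction ?_ ?_ ?_ ?_ hgmem
  · rintro x ⟨i, -, rfl⟩
    exact mulv hn w hw i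
  · simp
  · intro a b _ _ ha hb
    rw [add_mul]; exact Ideal.add_mem _ ha hb
  · intro r a _ ha
    rw [smul_eq_mul, mul_assoc]
    exact Ideal.mul_mem_left _ _ ha

end Stmt18Aux

set_option maxHeartbeats 1000000 in
set_option synthInstance.maxHeartbeats 1000000 in
/-- Corollary 4.2: the edge ideal of a weighted oriented `n`-cycle (`n ≥ 3`) with all
weights `≥ 2` has `depth(I) = 1` as a graded module over the polynomial ring.
(Vertices are indexed cyclically by `Fin n`; `finRotate n` is the successor `i ↦ i + 1 (mod n)`.) -/
theorem stmt18 (k : Type) [Field k] (n : ℕ) (hn : 3 ≤ n) (w : Fin n → ℕ)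
    (hw : ∀ i, 2 ≤ w i)
    (I : Ideal (MvPolynomial (Fin n) k))
    (hI : I = Ideal.span {f | ∃ i : Fin n, f = X i * X (finRotate n i) ^ w (finRotate n i)}) :
    mdepth (Fin n) k I = 1 := by   classical
  obtain ⟨m, rfl⟩ : ∃ m, n = m + 3 := ⟨n - 3, by omega⟩
  open Stmt18Aux in
  have hset : {f | ∃ i : Fin (m+3), f = X i * X (finRotate (m+3) i) ^ w (finRotate (m+3) i)}
      = (fun s => monomial s (1:k)) '' Set.range (gexp (m+3) w) := by
    ext f
    constructor
    · rintro ⟨i, rfl⟩; exact ⟨_, ⟨i, rfl⟩, (gen_eq w i).symm⟩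
    · rintro ⟨_, ⟨i, rfl⟩, rfl⟩; exact ⟨i, (gen_eq w i).symm⟩
  rw [hset] at hI
  subst hI
  open Stmt18Aux in
  set I : Ideal (MvPolynomial (Fin (m+3)) k) :=
    Ideal.span ((fun s => monomial s (1:k)) '' Set.range (gexp (m+3) w)) with hIdef
  open Stmt18Aux Submodule RingTheory.Sequence in
  have hg1 : (monomial (gexp (m+3) w 1) 1 : MvPolynomial (Fin (m+3)) k) ∈ I :=
    Ideal.subset_span ⟨_, ⟨1, rfl⟩, rfl⟩
  have hg1ne : (monomial (gexp (m+3) w 1) (1:k)) ≠ 0 := by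
    intro h
    have := congrArg (coeff (gexp (m+3) w 1)) h
    simp [coeff_monomial] at this
  open Stmt18Aux Submodule RingTheory.Sequence in
  have hbound : ∀ r ∈ {r | ∃ rs : List (MvPolynomial (Fin (m+3)) k), rs.length = r ∧
      (∀ x ∈ rs, constantCoeff x = 0) ∧ RingTheory.Sequence.IsRegular ↥I rs}, r ≤ 1 := by
    rintro r ⟨rs, hlen, hc, hreg⟩
    by_contra hr
    push_neg at hr
    rcases rs with _ | ⟨r0, rs'⟩
    · simp at hlen; omega
    rcases rs' with _ | ⟨r1, rest⟩
    · simp at hlen; omega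
    have h0 : IsSMulRegular
        (↥I ⧸ (Ideal.ofList ([] : List (MvPolynomial (Fin (m+3)) k)) • ⊤ : Submodule (MvPolynomial (Fin (m+3)) k) ↥I)) r0 :=
      hreg.toIsWeaklyRegular.regular_mod_prev 0 (by simp)
    have h1 : IsSMulRegular (↥I ⧸ (Ideal.ofList [r0] • ⊤ : Submodule (MvPolynomial (Fin (m+3)) k) ↥I)) r1 :=
      hreg.toIsWeaklyRegular.regular_mod_prev 1 (by simp)
    have q : (Ideal.ofList ([] : List (MvPolynomial (Fin (m+3)) k)) • ⊤ : Submodule (MvPolynomial (Fin (m+3)) k) ↥I)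
        = ⊥ := by
      rw [Ideal.ofList_nil, Submodule.bot_smul]
    have hr0 : r0 ≠ 0 := by
      rintro rfl
      have hsub := h0.subsingleton
      have h2 : ((⟨_, hg1⟩ : ↥I))
          ∈ (Ideal.ofList ([] : List (MvPolynomial (Fin (m+3)) k)) • ⊤ : Submodule (MvPolynomial (Fin (m+3)) k) ↥I) := by
        rw [← Submodule.Quotient.mk_eq_zero]
        haveI := hsub
        exact Subsingleton.elim _ _
      rw [q, Submodule.mem_bot] at h2
      exact hg1ne (congrArg Subtype.val h2)
    have hcr0 : constantCoeff r0 = 0 := hc _ (by simp)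
    have hcr1 : constantCoeff r1 = 0 := hc _ (by simp)
    have hu : r0 * monomial (vexp (m+3) w) 1 ∈ I := mulmem hn w hw r0 hcr0
    have hu1 : r1 * monomial (vexp (m+3) w) 1 ∈ I := mulmem hn w hw r1 hcr1
    have hmem : r1 • (⟨_, hu⟩ : ↥I) ∈ (Ideal.ofList [r0] • ⊤ : Submodule (MvPolynomial (Fin (m+3)) k) ↥I) := by
      rw [Ideal.ofList_singleton, Submodule.ideal_span_singleton_smul]
      have heq : r1 • (⟨_, hu⟩ : ↥I) = r0 • (⟨_, hu1⟩ : ↥I) := by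
        apply Subtype.ext
        show r1 * (r0 * monomial (vexp (m+3) w) 1) = r0 * (r1 * monomial (vexp (m+3) w) 1)
        ring
      rw [heq]
      exact Submodule.smul_mem_pointwise_smul _ _ _ trivial
    have hzero : ((⟨_, hu⟩ : ↥I)) ∈ (Ideal.ofList [r0] • ⊤ : Submodule (MvPolynomial (Fin (m+3)) k) ↥I) := by
      rw [← Submodule.Quotient.mk_eq_zero]
      apply h1
      show r1 • Submodule.Quotient.mk _ = r1 • (0 : _)
      rw [smul_zero, ← Submodule.Quotient.mk_smul, Submodule.Quotient.mk_eq_zero]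
      exact hmem
    rw [Ideal.ofList_singleton, Submodule.ideal_span_singleton_smul,
      ← SetLike.mem_coe, Submodule.coe_pointwise_smul, Set.mem_smul_set] at hzero
    obtain ⟨y, -, hy⟩ := hzero
    have hyv : r0 * (y : MvPolynomial (Fin (m+3)) k) = r0 * monomial (vexp (m+3) w) 1 :=
      congrArg Subtype.val hy
    have hv : (y : MvPolynomial (Fin (m+3)) k) = monomial (vexp (m+3) w) 1 :=
      mul_left_cancel₀ hr0 hyv
    exact v_notin hn w hw (hv ▸ y.2)
  open Stmt18Aux Submodule RingTheory.Sequence in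
  have hone : 1 ∈ {r | ∃ rs : List (MvPolynomial (Fin (m+3)) k), rs.length = r ∧
      (∀ x ∈ rs, constantCoeff x = 0) ∧ RingTheory.Sequence.IsRegular ↥I rs} := by
    refine ⟨[X 0], rfl, ?_, ⟨⟨?_⟩, ?_⟩⟩
    · intro x hx
      simp only [List.mem_singleton] at hx
      rw [hx, constantCoeff_X]
    · intro i hi
      obtain rfl : i = 0 := by simpa using hi
      have q : (Ideal.ofList ([] : List (MvPolynomial (Fin (m+3)) k)) • ⊤ : Submodule (MvPolynomial (Fin (m+3)) k) ↥I)
          = ⊥ := by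
        rw [Ideal.ofList_nil, Submodule.bot_smul]
      have hreg' : IsSMulRegular (↥I) (X 0 : MvPolynomial (Fin (m+3)) k) := by
        intro a b hab
        apply Subtype.ext
        have : (X 0 : MvPolynomial (Fin (m+3)) k) * (a : MvPolynomial (Fin (m+3)) k)
            = X 0 * (b : MvPolynomial (Fin (m+3)) k) := congrArg Subtype.val hab
        exact mul_left_cancel₀ (X_ne_zero _) this
      exact ((Submodule.quotEquivOfEqBot _ q).isSMulRegular_congr _).mpr hreg'

    · intro htop
      have h10 : (1 : Fin (m + 3)) ≠ 0 := by
        intro h; have := congrArg Fin.val h; simp [Fin.val_one] at this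
      have h20 : finRotate (m + 3) 1 ≠ 0 := by
        simp only [finRotate_succ_apply]
        intro h
        have := congrArg Fin.val h
        rw [Fin.val_add] at this
        simp [Fin.val_one, Nat.mod_eq_of_lt] at this
      have hmemtop : ((⟨_, hg1⟩ : ↥I)) ∈ (Ideal.ofList [(X 0 : MvPolynomial (Fin (m+3)) k)] • ⊤ : Submodule (MvPolynomial (Fin (m+3)) k) ↥I) := by
        rw [← htop]; trivial
      rw [Ideal.ofList_singleton, Submodule.ideal_span_singleton_smul,
        ← SetLike.mem_coe, Submodule.coe_pointwise_smul, Set.mem_smul_set] at hmemtop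
      obtain ⟨y, -, hy⟩ := hmemtop
      have hyv : (X 0 : MvPolynomial (Fin (m+3)) k) * (y : MvPolynomial (Fin (m+3)) k)
          = monomial (gexp (m+3) w 1) 1 :=
        congrArg Subtype.val hy
      have hcoeff := congrArg (coeff (gexp (m+3) w 1)) hyv
      rw [coeff_X_mul'] at hcoeff
      have h20' : (1 + 1 : Fin (m+3)) ≠ 0 := by
        simpa [finRotate_succ_apply] using h20
      have hzero0 : gexp (m+3) w 1 0 = 0 := by
        simp [gexp, Finsupp.single_apply, if_neg (Ne.symm h10), if_neg (Ne.symm h20)]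
        exact fun h => absurd h h20' 
      rw [if_neg (by simp [Finsupp.mem_support_iff, hzero0])] at hcoeff
      rw [coeff_monomial, if_pos rfl] at hcoeff
      exact one_ne_zero hcoeff.symm
  exact le_antisymm (csSup_le ⟨1, hone⟩ hbound) (le_csSup ⟨1, hbound⟩ hone)
end
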